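/- arXiv:1307.7324 — 3 statements merged into one kernel-verified Lean document; each statement's English description precedes it below -/
import Mathlib

section
/- For every complex number q with |q| < 1, the sum of the terms of ∑_{k∈ℤ}(−1)^k q^{k(5k+3)/2} over those k divisible by 3 equals φ(q⁹)·b(q⁹); that is, ∑_{m∈ℤ}(−1)^m q^{3m(15m+3)/2} = φ(q⁹)·b(q⁹). (Lemma 3.3: the part of a(q)φ(q) supported on exponents ≡ 0 mod 3 equals φ(q⁹)b(q⁹).) -/
open scoped BigOperators

/-- The Euler function `φ(q) = ∏_{n=1}^∞ (1 - q^n)`. -/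
noncomputable def eulerPhi (q : ℂ) : ℂ := ∏' n : ℕ, (1 - q ^ (n + 1))

/-- The first Rogers–Ramanujan series
`a(q) = ∏_{n=1}^∞ 1/((1 - q^{5n-2})(1 - q^{5n-3}))`. -/
noncomputable def rrA (q : ℂ) : ℂ :=
  ∏' n : ℕ, ((1 - q ^ (5 * n + 3)) * (1 - q ^ (5 * n + 2)))⁻¹

/-- The second Rogers–Ramanujan series
`b(q) = ∏_{n=1}^∞ 1/((1 - q^{5n-1})(1 - q^{5n-4}))`. -/
noncomputable def rrB (q : ℂ) : ℂ :=
  ∏' n : ℕ, ((1 - q ^ (5 * n + 4)) * (1 - q ^ (5 * n + 1)))⁻¹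

/-- `G(q) = ∏_{n=1}^∞ (1-q^{15n})(1-q^{15n-7})(1-q^{15n-8})
          - q ∏_{n=1}^∞ (1-q^{15n})(1-q^{15n-13})(1-q^{15n-2})`. -/
noncomputable def Gf (q : ℂ) : ℂ :=
  (∏' n : ℕ, (1 - q ^ (15 * n + 15)) * (1 - q ^ (15 * n + 8)) * (1 - q ^ (15 * n + 7)))
  - q * ∏' n : ℕ, (1 - q ^ (15 * n + 15)) * (1 - q ^ (15 * n + 2)) * (1 - q ^ (15 * n + 13))

/-- `H(q) = ∏_{n=1}^∞ (1-q^{15n})(1-q^{15n-4})(1-q^{15n-11})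
          + q ∏_{n=1}^∞ (1-q^{15n})(1-q^{15n-14})(1-q^{15n-1})`. -/
noncomputable def Hf (q : ℂ) : ℂ :=
  (∏' n : ℕ, (1 - q ^ (15 * n + 15)) * (1 - q ^ (15 * n + 11)) * (1 - q ^ (15 * n + 4)))
  + q * ∏' n : ℕ, (1 - q ^ (15 * n + 15)) * (1 - q ^ (15 * n + 1)) * (1 - q ^ (15 * n + 14))


open Filter Finset Complex Topology

namespace JTP

lemma exp_le_one_sub {t r : ℝ} (h0 : 0 ≤ t) (htr : t ≤ r) (hr : r < 1) :
    Real.exp (-(t * (1 - r)⁻¹)) ≤ 1 - t := by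
  have hr0 : (0:ℝ) < 1 - r := by linarith
  have ht1 : (0:ℝ) < 1 - t := by linarith
  have hinv : (1 - r) * (1 - r)⁻¹ = 1 := mul_inv_cancel₀ hr0.ne'
  have hipos : (0:ℝ) < (1 - r)⁻¹ := inv_pos.2 hr0
  have h1 : t * (1 - r)⁻¹ + 1 ≤ Real.exp (t * (1 - r)⁻¹) := Real.add_one_le_exp _
  have h3 : (1 - r) * (1 - r)⁻¹ ≤ (1 - t) * (1 - r)⁻¹ := by
    apply mul_le_mul_of_nonneg_right (by linarith) hipos.le
  have h2 : 1 ≤ (1 - t) * Real.exp (t * (1 - r)⁻¹) := by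
    have h4 : 1 ≤ (1 - t) * (t * (1 - r)⁻¹ + 1) := by nlinarith
    nlinarith
  rw [Real.exp_neg, inv_le_comm₀ (Real.exp_pos _) ht1, inv_le_iff_one_le_mul₀' ht1]
  exact h2

variable {x : ℂ} {e : ℕ → ℕ}

lemma norm_term_le (hx : ‖x‖ < 1) (he : ∀ n, n + 1 ≤ e n) (n : ℕ) :
    ‖x ^ e n‖ ≤ ‖x‖ ^ (n + 1) := by
  rw [norm_pow]
  exact pow_le_pow_of_le_one (norm_nonneg x) hx.le (he n)

lemma norm_term_le' (hx : ‖x‖ < 1) (he : ∀ n, n + 1 ≤ e n) (n : ℕ) : ‖x ^ e n‖ ≤ ‖x‖ := by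
  refine (norm_term_le hx he n).trans ?_
  calc ‖x‖ ^ (n+1) ≤ ‖x‖ ^ 1 := pow_le_pow_of_le_one (norm_nonneg x) hx.le (by omega)
  _ = ‖x‖ := pow_one _

lemma norm_term_lt (hx : ‖x‖ < 1) (he : ∀ n, n + 1 ≤ e n) (n : ℕ) : ‖x ^ e n‖ < 1 :=
  lt_of_le_of_lt (norm_term_le' hx he n) hx

lemma term_ne_zero (hx : ‖x‖ < 1) (he : ∀ n, n + 1 ≤ e n) (n : ℕ) : 1 - x ^ e n ≠ 0 := by
  intro h
  have h1 : x ^ e n = 1 := by linear_combination -h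
  have : ‖x ^ e n‖ = 1 := by simp [h1]
  exact absurd this (ne_of_lt (norm_term_lt hx he n))

lemma summable_geom (hx : ‖x‖ < 1) : Summable fun n : ℕ => ‖x‖ ^ (n + 1) :=
  (summable_nat_add_iff 1).2 (summable_geometric_of_lt_one (norm_nonneg x) hx)

lemma summable_norm_pow (hx : ‖x‖ < 1) (he : ∀ n, n + 1 ≤ e n) :
    Summable fun n : ℕ => ‖x ^ e n‖ :=
  (summable_geom hx).of_nonneg_of_le (fun n => norm_nonneg _) (fun n => norm_term_le hx he n)

lemma sum_norm_pow_le (hx : ‖x‖ < 1) (he : ∀ n, n + 1 ≤ e n) (N : ℕ) :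
    ∑ n ∈ range N, ‖x ^ e n‖ ≤ (1 - ‖x‖)⁻¹ := by
  have h1 : ∑ n ∈ range N, ‖x ^ e n‖ ≤ ∑' n : ℕ, ‖x‖ ^ (n + 1) := by
    refine le_trans (Finset.sum_le_sum fun n _ => norm_term_le hx he n) ?_
    exact Summable.sum_le_tsum _ (fun n _ => by positivity) (summable_geom hx)
  refine h1.trans ?_
  have h2 : ∑' n : ℕ, ‖x‖ ^ (n + 1) ≤ ∑' n : ℕ, ‖x‖ ^ n :=
    Summable.tsum_le_tsum (fun n => pow_le_pow_of_le_one (norm_nonneg x) hx.le (by omega))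
      (summable_geom hx) (summable_geometric_of_lt_one (norm_nonneg x) hx)
  refine h2.trans ?_
  rw [tsum_geometric_of_lt_one (norm_nonneg x) hx]

lemma summable_log (hx : ‖x‖ < 1) (he : ∀ n, n + 1 ≤ e n) :
    Summable fun n : ℕ => Complex.log (1 - x ^ e n) := by
  set C : ℝ := (1 - ‖x‖)⁻¹ / 2 + 1 with hC
  refine Summable.of_norm_bounded (g := fun n => C * ‖x‖ ^ (n + 1))
    ((summable_geom hx).mul_left C) (fun n => ?_)
  have hz : ‖-(x ^ e n)‖ < 1 := by simpa using norm_term_lt hx he n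
  have hb := Complex.norm_log_one_add_le hz
  rw [show (1 : ℂ) + -(x ^ e n) = 1 - x ^ e n by ring] at hb
  refine hb.trans ?_
  rw [norm_neg] at *
  set t := ‖x ^ e n‖ with ht
  have h1 : t ≤ ‖x‖ := norm_term_le' hx he n
  have h2 : t ≤ ‖x‖ ^ (n+1) := norm_term_le hx he n
  have h0 : 0 ≤ t := norm_nonneg _
  have hx1 : (0:ℝ) < 1 - ‖x‖ := by linarith
  have hmono : (1 - t)⁻¹ ≤ (1 - ‖x‖)⁻¹ := by
    apply inv_anti₀ hx1; linarith
  have ht1 : t ≤ 1 := h1.trans hx.le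
  have hxp : 0 ≤ ‖x‖ ^ (n+1) := by positivity
  have hip : 0 ≤ (1 - t)⁻¹ := by apply inv_nonneg.2; linarith
  have h5 : t * (1 - t)⁻¹ ≤ (1 - ‖x‖)⁻¹ := by nlinarith
  calc t ^ 2 * (1 - t)⁻¹ / 2 + t ≤ t * (1 - ‖x‖)⁻¹ / 2 + t := by nlinarith
  _ ≤ ‖x‖ ^ (n+1) * (1 - ‖x‖)⁻¹ / 2 + ‖x‖ ^ (n+1) := by
      have : (0:ℝ) ≤ (1 - ‖x‖)⁻¹ := by positivity
      gcongr
  _ = C * ‖x‖ ^ (n + 1) := by rw [hC]; ring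

lemma multipliable (hx : ‖x‖ < 1) (he : ∀ n, n + 1 ≤ e n) :
    Multipliable fun n : ℕ => 1 - x ^ e n :=
  Complex.multipliable_of_summable_log (summable_log hx he)

lemma tendsto_partial (hx : ‖x‖ < 1) (he : ∀ n, n + 1 ≤ e n) :
    Tendsto (fun N => ∏ n ∈ range N, (1 - x ^ e n)) atTop (𝓝 (∏' n, (1 - x ^ e n))) :=
  (multipliable hx he).hasProd.tendsto_prod_nat

lemma partial_lower (hx : ‖x‖ < 1) (he : ∀ n, n + 1 ≤ e n) (N : ℕ) :
    Real.exp (-((1 - ‖x‖)⁻¹ * (1 - ‖x‖)⁻¹)) ≤ ‖∏ n ∈ range N, (1 - x ^ e n)‖ := by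
  have key : ∀ n ∈ range N, Real.exp (-(‖x ^ e n‖ * (1 - ‖x‖)⁻¹)) ≤ ‖1 - x ^ e n‖ := by
    intro n _
    refine le_trans (exp_le_one_sub (norm_nonneg _) (norm_term_le' hx he n) hx) ?_
    calc 1 - ‖x ^ e n‖ = ‖(1:ℂ)‖ - ‖x ^ e n‖ := by simp
    _ ≤ ‖1 - x ^ e n‖ := norm_sub_norm_le _ _
  calc Real.exp (-((1 - ‖x‖)⁻¹ * (1 - ‖x‖)⁻¹))
      ≤ Real.exp (∑ n ∈ range N, -(‖x ^ e n‖ * (1 - ‖x‖)⁻¹)) := by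
        apply Real.exp_le_exp.2
        rw [Finset.sum_neg_distrib, neg_le_neg_iff, ← Finset.sum_mul, mul_comm]
        have h0 : (0:ℝ) ≤ (1 - ‖x‖)⁻¹ := by
          have : (0:ℝ) < 1 - ‖x‖ := by linarith
          positivity
        exact mul_le_mul_of_nonneg_left (sum_norm_pow_le hx he N) h0
  _ = ∏ n ∈ range N, Real.exp (-(‖x ^ e n‖ * (1 - ‖x‖)⁻¹)) := by rw [Real.exp_sum]
  _ ≤ ∏ n ∈ range N, ‖1 - x ^ e n‖ :=
      Finset.prod_le_prod (fun n _ => (Real.exp_pos _).le) key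
  _ = ‖∏ n ∈ range N, (1 - x ^ e n)‖ := (norm_prod _ _).symm

lemma norm_tprod_lower (hx : ‖x‖ < 1) (he : ∀ n, n + 1 ≤ e n) :
    Real.exp (-((1 - ‖x‖)⁻¹ * (1 - ‖x‖)⁻¹)) ≤ ‖∏' n : ℕ, (1 - x ^ e n)‖ := by
  have h1 : Tendsto (fun N => ‖∏ n ∈ range N, (1 - x ^ e n)‖) atTop
      (𝓝 ‖∏' n : ℕ, (1 - x ^ e n)‖) := (tendsto_partial hx he).norm
  exact ge_of_tendsto' h1 (partial_lower hx he)

lemma tprod_ne_zero (hx : ‖x‖ < 1) (he : ∀ n, n + 1 ≤ e n) :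
    (∏' n : ℕ, (1 - x ^ e n)) ≠ 0 := by
  intro h
  have := norm_tprod_lower hx he
  rw [h] at this
  simp only [norm_zero] at this
  exact absurd this (not_le.2 (Real.exp_pos _))

lemma partial_upper (hx : ‖x‖ < 1) (he : ∀ n, n + 1 ≤ e n) (N : ℕ) :
    ‖∏ n ∈ range N, (1 - x ^ e n)‖ ≤ Real.exp (1 - ‖x‖)⁻¹ := by
  rw [norm_prod]
  calc ∏ n ∈ range N, ‖1 - x ^ e n‖ ≤ ∏ n ∈ range N, Real.exp ‖x ^ e n‖ := by
        refine Finset.prod_le_prod (fun n _ => norm_nonneg _) (fun n _ => ?_)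
        calc ‖1 - x ^ e n‖ ≤ ‖(1:ℂ)‖ + ‖x ^ e n‖ := norm_sub_le _ _
        _ = ‖x ^ e n‖ + 1 := by simp [add_comm]
        _ ≤ Real.exp ‖x ^ e n‖ := Real.add_one_le_exp _
  _ = Real.exp (∑ n ∈ range N, ‖x ^ e n‖) := (Real.exp_sum _ _).symm
  _ ≤ Real.exp (1 - ‖x‖)⁻¹ := Real.exp_le_exp.2 (sum_norm_pow_le hx he N)

end JTP
namespace JTP

/-- triangular numbers: `E k = k*(k-1)/2` -/
def E : ℕ → ℕ
  | 0 => 0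
  | k+1 => E k + k

/-- Gaussian binomial coefficients evaluated at `Q`. -/
def gb (Q : ℂ) : ℕ → ℕ → ℂ
  | 0, 0 => 1
  | 0, _+1 => 0
  | _+1, 0 => 1
  | M+1, k+1 => gb Q M (k+1) + Q ^ (M - k) * gb Q M k

variable {Q : ℂ}

@[simp] lemma gb_zero_right (M : ℕ) : gb Q M 0 = 1 := by cases M <;> rfl

lemma gb_eq_zero : ∀ M k : ℕ, M < k → gb Q M k = 0 := by
  intro M
  induction M with
  | zero => intro k hk; cases k with
    | zero => omega
    | succ j => rfl
  | succ M ih =>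
    intro k hk
    cases k with
    | zero => omega
    | succ j =>
      show gb Q M (j+1) + Q ^ (M - j) * gb Q M j = 0
      rw [ih (j+1) (by omega), ih j (by omega)]
      ring

lemma gb_diag : ∀ M : ℕ, gb Q M M = 1 := by
  intro M
  induction M with
  | zero => rfl
  | succ M ih =>
    show gb Q M (M+1) + Q ^ (M - M) * gb Q M M = 1
    rw [gb_eq_zero M (M+1) (by omega), ih, Nat.sub_self]
    ring

/-- partial Euler products -/
noncomputable def hh (Q : ℂ) (N : ℕ) : ℂ := ∏ j ∈ range N, (1 - Q ^ (j + 1))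

@[simp] lemma hh_zero : hh Q 0 = 1 := by simp [hh]

lemma hh_succ (N : ℕ) : hh Q (N + 1) = hh Q N * (1 - Q ^ (N + 1)) := Finset.prod_range_succ _ _

/-- The q-binomial theorem. -/
lemma qbinom (z : ℂ) : ∀ M : ℕ,
    ∏ i ∈ range M, (1 + z * Q ^ i) =
      ∑ k ∈ range (M + 1), Q ^ E k * gb Q M k * z ^ k := by
  intro M
  induction M with
  | zero => simp [E, gb]
  | succ M ih =>
    rw [prod_range_succ, ih]
    have hsplit : ∑ k ∈ range (M + 2), Q ^ E k * gb Q (M+1) k * z ^ k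
        = (∑ k ∈ range (M + 1), Q ^ E k * gb Q M k * z ^ k)
          + z * Q ^ M * ∑ k ∈ range (M + 1), Q ^ E k * gb Q M k * z ^ k := by
      rw [Finset.sum_range_succ' (fun k => Q ^ E k * gb Q (M+1) k * z ^ k) (M+1)]
      have hterm : ∀ i ∈ range (M+1),
          Q ^ E (i+1) * gb Q (M+1) (i+1) * z ^ (i+1)
          = Q ^ E (i+1) * gb Q M (i+1) * z ^ (i+1)
            + z * Q ^ M * (Q ^ E i * gb Q M i * z ^ i) := by
        intro i hi
        have hi' : i ≤ M := by simpa using Nat.lt_succ_iff.1 (mem_range.1 hi)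
        show Q ^ E (i+1) * (gb Q M (i+1) + Q ^ (M - i) * gb Q M i) * z ^ (i+1) = _
        have hE : E (i+1) = E i + i := rfl
        have hpow : Q ^ E (i+1) * Q ^ (M - i) = Q ^ E i * Q ^ M := by
          rw [← pow_add, ← pow_add, hE]
          congr 1
          omega
        calc Q ^ E (i+1) * (gb Q M (i+1) + Q ^ (M - i) * gb Q M i) * z ^ (i+1)
            = Q ^ E (i+1) * gb Q M (i+1) * z ^ (i+1)
              + (Q ^ E (i+1) * Q ^ (M - i)) * gb Q M i * z ^ (i+1) := by ring
        _ = _ := by rw [hpow]; ring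
      rw [Finset.sum_congr rfl hterm, Finset.sum_add_distrib]
      have h1 : ∑ i ∈ range (M+1), Q ^ E (i+1) * gb Q M (i+1) * z ^ (i+1)
            + Q ^ E 0 * gb Q (M+1) 0 * z ^ 0
          = ∑ k ∈ range (M + 1), Q ^ E k * gb Q M k * z ^ k := by
        have : Q ^ E 0 * gb Q (M+1) 0 * z ^ 0 = Q ^ E 0 * gb Q M 0 * z ^ 0 := by simp
        rw [this, ← Finset.sum_range_succ' (fun k => Q ^ E k * gb Q M k * z ^ k) (M+1),
          Finset.sum_range_succ]
        rw [gb_eq_zero M (M+1) (by omega)]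
        ring
      rw [← Finset.mul_sum]
      linear_combination h1
    rw [hsplit]
    ring

lemma gb_mul_hh : ∀ M k : ℕ, k ≤ M → hh Q k * hh Q (M - k) * gb Q M k = hh Q M := by
  intro M
  induction M with
  | zero => intro k hk; interval_cases k; simp
  | succ M ih =>
    intro k hk
    cases k with
    | zero => simp
    | succ j =>
      show hh Q (j+1) * hh Q (M + 1 - (j+1)) * (gb Q M (j+1) + Q ^ (M - j) * gb Q M j) = hh Q (M+1)
      rcases Nat.lt_or_ge j M with hj | hj
      · -- j + 1 ≤ M
        have hMj : M + 1 - (j + 1) = (M - (j+1)) + 1 := by omega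
        have hMj2 : M - (j+1) + 1 = M - j := by omega
        have e1 : hh Q (M + 1 - (j+1)) = hh Q (M - (j+1)) * (1 - Q ^ (M - j)) := by
          rw [hMj, hh_succ, hMj2]
        have e2 : hh Q (j+1) = hh Q j * (1 - Q ^ (j+1)) := hh_succ j
        have i1 := ih (j+1) (by omega)
        have i2 := ih j (by omega)
        have hMj3 : M - j = M - j - 1 + 1 := by omega
        have hpow : Q ^ (M - j) * Q ^ (j + 1) = Q ^ (M + 1) := by
          rw [← pow_add]; congr 1; omega
        have e3 : hh Q (M - j) = hh Q (M - (j+1)) * (1 - Q ^ (M - j)) := by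
          rw [← hMj2, hh_succ, hMj2]
        calc hh Q (j+1) * hh Q (M + 1 - (j+1)) * (gb Q M (j+1) + Q ^ (M - j) * gb Q M j)
            = (1 - Q ^ (M - j)) * (hh Q (j+1) * hh Q (M - (j+1)) * gb Q M (j+1))
              + Q ^ (M - j) * (1 - Q ^ (j+1)) * (hh Q j * hh Q (M - j) * gb Q M j) := by
              rw [e1, e2, e3]
              ring
        _ = (1 - Q ^ (M - j)) * hh Q M + Q ^ (M - j) * (1 - Q ^ (j+1)) * hh Q M := by
              rw [i1, i2]
        _ = hh Q M * (1 - Q ^ (M + 1)) := by rw [← hpow]; ring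
        _ = hh Q (M+1) := (hh_succ M).symm
      · -- j = M
        have hjM : j = M := by omega
        subst hjM
        rw [gb_eq_zero j (j+1) (by omega), gb_diag, Nat.sub_self]
        simp [hh_succ]

end JTP
namespace JTP

lemma zpow_sum₀ {ι : Type*} {x : ℂ} (hx : x ≠ 0) (s : Finset ι) (f : ι → ℤ) :
    x ^ (∑ i ∈ s, f i) = ∏ i ∈ s, x ^ f i := by
  classical
  induction s using Finset.induction with
  | empty => simp
  | insert a s h ih => rw [Finset.sum_insert h, Finset.prod_insert h, zpow_add₀ hx, ih]

lemma zpow_nat_mul {x : ℂ} (hx : x ≠ 0) (c : ℤ) (k : ℕ) :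
    (x ^ c) ^ k = x ^ (c * k) := by
  induction k with
  | zero => simp
  | succ k ih =>
    rw [pow_succ, ih, ← zpow_add₀ hx]
    congr 1
    push_cast
    ring

/-- `g N = (5 N^2 - N)/2 = ∑_{i<N} (5i+2)` -/
def gg : ℕ → ℕ
  | 0 => 0
  | N+1 => gg N + 5*N + 2

lemma gg_spec (N : ℕ) : (gg N : ℤ) * 2 = 5*N^2 - N := by
  induction N with
  | zero => simp [gg]
  | succ N ih =>
    show ((gg N + 5*N + 2 : ℕ) : ℤ) * 2 = _
    push_cast
    push_cast at ih
    linarith [ih]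

lemma E_spec (k : ℕ) : (E k : ℤ) * 2 = k^2 - k := by
  induction k with
  | zero => simp [E]
  | succ k ih =>
    show ((E k + k : ℕ) : ℤ) * 2 = _
    push_cast
    push_cast at ih
    linarith [ih]

/-- the natural exponent `(5m²+m)/2` -/
def em (m : ℤ) : ℕ := (m * (5 * m + 1) / 2).toNat

lemma em_nonneg (m : ℤ) : 0 ≤ m * (5 * m + 1) := by
  rcases le_or_gt 0 m with h | h
  · positivity
  · nlinarith

lemma em_cast (m : ℤ) : (em m : ℤ) * 2 = m * (5 * m + 1) := by
  have h2 : (2:ℤ) ∣ m * (5 * m + 1) := by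
    rcases Int.even_or_odd m with ⟨a, ha⟩ | ⟨a, ha⟩
    · exact ⟨a * (5*m+1), by rw [ha]; ring⟩
    · exact ⟨m * (5*a+3), by rw [ha]; ring⟩
  rw [em, Int.toNat_of_nonneg (Int.ediv_nonneg (em_nonneg m) (by norm_num))]
  exact Int.ediv_mul_cancel h2

lemma gauss (N : ℕ) : (∑ i ∈ range N, (i:ℤ)) * 2 = N^2 - N := by
  induction N with
  | zero => simp
  | succ n ihn =>
    rw [Finset.sum_range_succ]
    push_cast
    push_cast at ihn
    linarith [ihn]

/-- The finite Jacobi-type identity. -/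
lemma fin_id {x : ℂ} (hx0 : x ≠ 0) (N : ℕ) :
    (∏ i ∈ range N, (1 - x ^ (5*i+3))) * ∏ i ∈ range N, (1 - x ^ (5*i+2)) =
      ∑ m ∈ Finset.Icc (-(N:ℤ)) (N:ℤ),
        (-1 : ℂ) ^ m * x ^ em m * gb (x^5) (2*N) ((m + N).toNat) := by
  simp only [two_mul]
  have hqb := qbinom (Q := x^5) (-x ^ ((3:ℤ) - 5*N)) (N+N)
  -- rewrite LHS of hqb
  have hterm : ∀ i : ℕ, 1 + (-x ^ ((3:ℤ) - 5*N)) * (x^5)^i = 1 - x ^ (5*(i:ℤ) + 3 - 5*N) := by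
    intro i
    have : (x^5)^i = x ^ ((5*i : ℕ) : ℤ) := by
      rw [zpow_natCast, pow_mul]
    rw [this, neg_mul, ← zpow_add₀ hx0]
    push_cast
    ring_nf
  rw [Finset.prod_congr rfl (fun i _ => hterm i)] at hqb
  -- split the product
  rw [Finset.prod_range_add] at hqb
  have hsec : ∀ i ∈ range N, (1 - x ^ (5*((N + i : ℕ):ℤ) + 3 - 5*N)) = 1 - x ^ (5*i+3) := by
    intro i _
    congr 1
    have : (5*((N + i : ℕ):ℤ) + 3 - 5*N) = ((5*i+3 : ℕ) : ℤ) := by push_cast; ring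
    rw [this, zpow_natCast]
  rw [Finset.prod_congr rfl hsec] at hqb
  have hfir : ∀ i ∈ range N, (1 - x ^ (5*(i:ℤ) + 3 - 5*N)) =
      (-x ^ (5*(i:ℤ) + 3 - 5*N)) * (1 - x ^ (5*((N:ℤ) - 1 - i) + 2)) := by
    intro i hi
    have hmem : (i:ℤ) < N := by exact_mod_cast mem_range.1 hi
    have hinv : x ^ (5*(i:ℤ) + 3 - 5*N) * x ^ (5*((N:ℤ) - 1 - i) + 2) = 1 := by
      rw [← zpow_add₀ hx0, show 5*(i:ℤ) + 3 - 5*N + (5*((N:ℤ) - 1 - i) + 2) = 0 by ring,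
        zpow_zero]
    calc 1 - x ^ (5*(i:ℤ) + 3 - 5*N)
        = x ^ (5*(i:ℤ) + 3 - 5*N) * x ^ (5*((N:ℤ) - 1 - i) + 2) - x ^ (5*(i:ℤ) + 3 - 5*N) := by
          rw [hinv]
    _ = (-x ^ (5*(i:ℤ) + 3 - 5*N)) * (1 - x ^ (5*((N:ℤ) - 1 - i) + 2)) := by ring
  rw [Finset.prod_congr rfl hfir, Finset.prod_mul_distrib] at hqb
  -- the reflected product
  have hrefl : ∏ i ∈ range N, (1 - x ^ (5*((N:ℤ) - 1 - i) + 2)) =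
      ∏ i ∈ range N, (1 - x ^ (5*i+2)) := by
    rw [← Finset.prod_range_reflect (fun j => 1 - x ^ (5*j+2)) N]
    refine Finset.prod_congr rfl (fun i hi => ?_)
    have hmem : i < N := mem_range.1 hi
    congr 1
    have : (5*((N:ℤ) - 1 - i) + 2) = ((5*(N - 1 - i)+2 : ℕ) : ℤ) := by
      push_cast [Nat.cast_sub (by omega : i ≤ N - 1), Nat.cast_sub (by omega : 1 ≤ N)]
      ring
    rw [this, zpow_natCast]
  rw [hrefl] at hqb
  -- the sign/power prefactor
  have hpre : ∏ i ∈ range N, (-x ^ (5*(i:ℤ) + 3 - 5*N)) =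
      (-1:ℂ)^N * x ^ (-(gg N : ℤ)) := by
    have h1 : ∀ i ∈ range N, (-x ^ (5*(i:ℤ) + 3 - 5*N)) = (-1) * x ^ (5*(i:ℤ) + 3 - 5*N) := by
      intro i _; ring
    rw [Finset.prod_congr rfl h1, Finset.prod_mul_distrib, Finset.prod_const,
      ← zpow_sum₀ hx0]
    congr 2
    · simp
    · -- ∑ (5i+3-5N) = -(gg N)
      have key : (∑ i ∈ range N, (5*(i:ℤ) + 3 - 5*N)) * 2 = (-(gg N : ℤ)) * 2 := by
        rw [Finset.sum_mul]
        have : ∀ i ∈ range N, (5*(i:ℤ) + 3 - 5*N) * 2 = 10*(i:ℤ) + (6 - 10*N) := by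
          intro i _; ring
        rw [Finset.sum_congr rfl this, Finset.sum_add_distrib, Finset.sum_const,
          ← Finset.mul_sum]
        have hgauss := gauss N
        have hg := gg_spec N
        simp only [Finset.card_range, nsmul_eq_mul]
        linarith [hgauss, hg]
      exact mul_right_cancel₀ (by norm_num) key
  rw [hpre] at hqb
  -- now hqb : (-1)^N * x^(-(gg N)) * B_N = ∑ ...
  -- multiply both sides by (-1)^N * x^(gg N)
  have hx1 : ((-1:ℂ)^N * x ^ ((gg N : ℤ))) * ((-1:ℂ)^N * x ^ (-(gg N : ℤ))) = 1 := by
    have h1 : ((-1:ℂ)^N) * ((-1:ℂ)^N) = 1 := by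
      rw [← pow_add, ← two_mul, pow_mul]
      norm_num
    have h2 : x ^ ((gg N : ℤ)) * x ^ (-(gg N : ℤ)) = 1 := by
      rw [← zpow_add₀ hx0]
      simp
    calc ((-1:ℂ)^N * x ^ ((gg N : ℤ))) * ((-1:ℂ)^N * x ^ (-(gg N : ℤ)))
        = (((-1:ℂ)^N) * ((-1:ℂ)^N)) * (x ^ ((gg N : ℤ)) * x ^ (-(gg N : ℤ))) := by ring
    _ = 1 := by rw [h1, h2, one_mul]
  have hqb2 : (∏ i ∈ range N, (1 - x ^ (5*i+3))) * ∏ i ∈ range N, (1 - x ^ (5*i+2)) =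
      ((-1:ℂ)^N * x ^ ((gg N : ℤ))) *
        ∑ k ∈ range (N+N + 1), (x^5) ^ E k * gb (x^5) (N+N) k * (-x ^ ((3:ℤ) - 5*N)) ^ k := by
    calc (∏ i ∈ range N, (1 - x ^ (5*i+3))) * ∏ i ∈ range N, (1 - x ^ (5*i+2))
        = ((-1:ℂ)^N * x ^ ((gg N : ℤ))) * ((-1:ℂ)^N * x ^ (-(gg N : ℤ)) *
            ((∏ i ∈ range N, (1 - x ^ (5*i+3))) * ∏ i ∈ range N, (1 - x ^ (5*i+2)))) := by
          rw [← mul_assoc, hx1, one_mul]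
    _ = _ := by
          rw [← hqb]; ring
  rw [hqb2, Finset.mul_sum]
  -- reindex k = m + N
  refine Finset.sum_nbij' (fun k => (k : ℤ) - N) (fun m => (m + N).toNat) ?_ ?_ ?_ ?_ ?_
  · intro k hk
    have := mem_range.1 hk
    simp only [Finset.mem_Icc]
    omega
  · intro m hm
    have := Finset.mem_Icc.1 hm
    simp only [mem_range]
    omega
  · intro k hk; have := mem_range.1 hk; omega
  · intro m hm; have := Finset.mem_Icc.1 hm; omega
  · intro k hk
    have hkN := mem_range.1 hk
    set m : ℤ := (k:ℤ) - N with hm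
    have htoNat : (m + N).toNat = k := by omega
    rw [htoNat]
    -- sign
    have hsign : (-1 : ℂ) ^ m = (-1:ℂ)^N * (-1:ℂ)^k := by
      rw [hm, zpow_sub₀ (by norm_num : (-1:ℂ) ≠ 0), zpow_natCast, zpow_natCast, ← pow_add]
      rw [show ((-1:ℂ)^k)/((-1:ℂ)^N) = (-1:ℂ)^k * ((-1:ℂ)^N)⁻¹ by ring]
      rw [← inv_pow, show ((-1:ℂ))⁻¹ = -1 by norm_num, ← pow_add]
      rw [show k + N = N + k by ring]
    -- powers
    have hp1 : (x^5) ^ E k = x ^ ((5 * E k : ℕ) : ℤ) := by rw [zpow_natCast, pow_mul]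
    have hp2 : (-x ^ ((3:ℤ) - 5*N)) ^ k = (-1:ℂ)^k * x ^ (((3:ℤ) - 5*N) * k) := by
      rw [neg_pow, zpow_nat_mul hx0]
    have hexp : (em m : ℤ) = (gg N : ℤ) + ((5 * E k : ℕ) : ℤ) + ((3:ℤ) - 5*N) * k := by
      have h1 := em_cast m
      have h2 := gg_spec N
      have h3 := E_spec k
      have : (em m : ℤ) * 2 = ((gg N : ℤ) + ((5 * E k : ℕ) : ℤ) + ((3:ℤ) - 5*N) * k) * 2 := by
        rw [h1, hm]
        push_cast
        push_cast at h2 h3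
        linear_combination (-1:ℤ) * h2 - 5 * h3
      exact mul_right_cancel₀ (by norm_num) this
    have hxpow : x ^ em m = x ^ ((gg N : ℤ)) * x ^ (((5 * E k : ℕ) : ℤ)) *
        x ^ (((3:ℤ) - 5*N) * k) := by
      rw [← zpow_add₀ hx0, ← zpow_add₀ hx0, ← hexp, ← zpow_natCast x (em m)]
    rw [hp1, hp2, hsign, hxpow]
    ring

end JTP
namespace JTP

variable {Q : ℂ}

lemma he1 : ∀ n : ℕ, n + 1 ≤ n + 1 := fun _ => le_rfl

lemma hh_ne_zero (hQ : ‖Q‖ < 1) (N : ℕ) : hh Q N ≠ 0 :=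
  Finset.prod_ne_zero_iff.2 fun n _ => term_ne_zero hQ (e := fun n => n + 1) he1 n

noncomputable def cc (Q : ℂ) : ℝ := Real.exp (-((1 - ‖Q‖)⁻¹ * (1 - ‖Q‖)⁻¹))
noncomputable def DD (Q : ℂ) : ℝ := Real.exp (1 - ‖Q‖)⁻¹

lemma cc_pos : 0 < cc Q := Real.exp_pos _

lemma hh_lower (hQ : ‖Q‖ < 1) (N : ℕ) : cc Q ≤ ‖hh Q N‖ :=
  partial_lower hQ (e := fun n => n + 1) he1 N

lemma hh_upper (hQ : ‖Q‖ < 1) (N : ℕ) : ‖hh Q N‖ ≤ DD Q :=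
  partial_upper hQ (e := fun n => n + 1) he1 N

lemma gb_eq_div (hQ : ‖Q‖ < 1) {M k : ℕ} (hk : k ≤ M) :
    gb Q M k = hh Q M / (hh Q k * hh Q (M - k)) := by
  rw [eq_div_iff (mul_ne_zero (hh_ne_zero hQ k) (hh_ne_zero hQ (M - k)))]
  linear_combination gb_mul_hh M k hk

lemma gb_bound (hQ : ‖Q‖ < 1) {M k : ℕ} (hk : k ≤ M) :
    ‖gb Q M k‖ ≤ DD Q / (cc Q * cc Q) := by
  rw [gb_eq_div hQ hk, norm_div, norm_mul]
  have h1 : cc Q * cc Q ≤ ‖hh Q k‖ * ‖hh Q (M - k)‖ :=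
    mul_le_mul (hh_lower hQ k) (hh_lower hQ (M - k)) cc_pos.le (norm_nonneg _)
  have hDD : (0:ℝ) ≤ DD Q := (Real.exp_pos _).le
  exact div_le_div₀ hDD (hh_upper hQ M) (mul_pos cc_pos cc_pos) h1

noncomputable def phiQ (Q : ℂ) : ℂ := ∏' n : ℕ, (1 - Q ^ (n + 1))

lemma phiQ_ne_zero (hQ : ‖Q‖ < 1) : phiQ Q ≠ 0 :=
  tprod_ne_zero hQ (e := fun n => n + 1) he1

lemma hh_tendsto (hQ : ‖Q‖ < 1) : Filter.Tendsto (hh Q) Filter.atTop (nhds (phiQ Q)) :=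
  tendsto_partial hQ (e := fun n => n + 1) he1

lemma gb_tendsto (hQ : ‖Q‖ < 1) (m : ℤ) :
    Filter.Tendsto (fun N : ℕ => gb Q (2 * N) ((m + N).toNat)) Filter.atTop
      (nhds (phiQ Q)⁻¹) := by
  have hcomp : ∀ u : ℕ → ℕ, Filter.Tendsto u Filter.atTop Filter.atTop →
      Filter.Tendsto (fun N => hh Q (u N)) Filter.atTop (nhds (phiQ Q)) :=
    fun u hu => (hh_tendsto hQ).comp hu
  have hu1 : Filter.Tendsto (fun N : ℕ => 2 * N) Filter.atTop Filter.atTop := by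
    rw [Filter.tendsto_atTop_atTop]
    intro b; exact ⟨b, fun a ha => by omega⟩
  have hu2 : Filter.Tendsto (fun N : ℕ => (m + N).toNat) Filter.atTop Filter.atTop := by
    rw [Filter.tendsto_atTop_atTop]
    intro b; exact ⟨b + m.natAbs, fun a ha => by omega⟩
  have hu3 : Filter.Tendsto (fun N : ℕ => 2 * N - (m + N).toNat) Filter.atTop Filter.atTop := by
    rw [Filter.tendsto_atTop_atTop]
    intro b; exact ⟨b + m.natAbs, fun a ha => by omega⟩
  have hdiv := ((hcomp _ hu1).div ((hcomp _ hu2).mul (hcomp _ hu3))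
    (mul_ne_zero (phiQ_ne_zero hQ) (phiQ_ne_zero hQ)))
  have hval : phiQ Q / (phiQ Q * phiQ Q) = (phiQ Q)⁻¹ := by
    field_simp
  rw [hval] at hdiv
  refine Filter.Tendsto.congr' ?_ hdiv
  rw [Filter.eventuallyEq_iff_exists_mem]
  refine ⟨{N | m.natAbs ≤ N}, Filter.mem_atTop _, fun N hN => ?_⟩
  simp only [Set.mem_setOf_eq] at hN
  have hk : (m + N).toNat ≤ 2 * N := by omega
  simp only [Pi.div_apply]
  rw [gb_eq_div hQ hk]

lemma em_ge (m : ℤ) : (m.natAbs : ℤ) ≤ (em m : ℤ) := by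
  have h := em_cast m
  rcases le_or_gt 0 m with hm | hm
  · have h2 : (m.natAbs : ℤ) = m := Int.natAbs_of_nonneg hm
    nlinarith
  · have h2 : (m.natAbs : ℤ) = -m := by omega
    nlinarith

lemma summable_em {x : ℂ} (hx : ‖x‖ < 1) : Summable fun m : ℤ => ‖x‖ ^ em m := by
  have hgeo : Summable fun n : ℕ => ‖x‖ ^ n := summable_geometric_of_lt_one (norm_nonneg x) hx
  have key : ∀ m : ℤ, ‖x‖ ^ em m ≤ ‖x‖ ^ m.natAbs := fun m =>
    pow_le_pow_of_le_one (norm_nonneg x) hx.le (by exact_mod_cast em_ge m)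
  apply Summable.of_nat_of_neg_add_one
  · exact hgeo.of_nonneg_of_le (fun n => by positivity)
      (fun n => le_trans (key n) (by simp))
  · refine hgeo.of_nonneg_of_le (fun n => by positivity) (fun n => ?_)
    refine le_trans (key (-(n+1))) ?_
    have : ((-(n+1) : ℤ)).natAbs = n + 1 := by omega
    rw [this]
    exact pow_le_pow_of_le_one (norm_nonneg x) hx.le (by omega)

lemma em_pos {m : ℤ} (hm : m ≠ 0) : em m ≠ 0 := by
  have h := em_cast m
  intro h0
  rw [h0] at h
  simp only [Nat.cast_zero, zero_mul] at h
  rcases lt_or_gt_of_ne hm with h1 | h1 <;> nlinarith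

lemma norm_neg_one_zpow (m : ℤ) : ‖(-1 : ℂ) ^ m‖ = 1 := by
  rw [norm_zpow]
  simp

/-- The key analytic identity: quintuple-type product formula. -/
lemma key_sum {x : ℂ} (hx : ‖x‖ < 1) :
    ∑' m : ℤ, (-1 : ℂ) ^ m * x ^ em m =
      phiQ (x ^ 5) * ((∏' n : ℕ, (1 - x ^ (5 * n + 3))) * ∏' n : ℕ, (1 - x ^ (5 * n + 2))) := by
  rcases eq_or_ne x 0 with rfl | hx0
  · -- x = 0
    have hL : ∑' m : ℤ, (-1 : ℂ) ^ m * (0:ℂ) ^ em m = 1 := by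
      rw [tsum_eq_single 0 (fun m hm => by
        rw [zero_pow (em_pos hm)]; ring)]
      simp [em]
    rw [hL, phiQ]
    have h5 : ∀ n : ℕ, (1 - ((0:ℂ) ^ 5) ^ (n+1)) = 1 := by
      intro n; rw [zero_pow (by norm_num : (5:ℕ) ≠ 0), zero_pow (by omega)]; ring
    have h3 : ∀ n : ℕ, (1 - (0:ℂ) ^ (5*n+3)) = 1 := by
      intro n; rw [zero_pow (by omega)]; ring
    have h2 : ∀ n : ℕ, (1 - (0:ℂ) ^ (5*n+2)) = 1 := by
      intro n; rw [zero_pow (by omega)]; ring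
    rw [tprod_congr h5, tprod_congr h3, tprod_congr h2, tprod_one]
    norm_num
  · have hQ : ‖x ^ 5‖ < 1 := by
      rw [norm_pow]
      exact pow_lt_one₀ (norm_nonneg x) hx (by norm_num)
    set K : ℝ := DD (x^5) / (cc (x^5) * cc (x^5)) with hK
    have hK0 : 0 ≤ K := by
      rw [hK]
      unfold DD cc
      positivity
    set F : ℕ → ℤ → ℂ := fun N m =>
      if m ∈ Finset.Icc (-(N:ℤ)) (N:ℤ) then
        (-1 : ℂ) ^ m * x ^ em m * gb (x^5) (2*N) ((m + N).toNat) else 0 with hF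
    set g : ℤ → ℂ := fun m => (-1 : ℂ) ^ m * x ^ em m * (phiQ (x^5))⁻¹ with hg
    -- evaluate finite sums
    have h_eval : ∀ N, ∑' m : ℤ, F N m =
        (∏ i ∈ Finset.range N, (1 - x ^ (5*i+3))) * ∏ i ∈ Finset.range N, (1 - x ^ (5*i+2)) := by
      intro N
      rw [tsum_eq_sum (s := Finset.Icc (-(N:ℤ)) (N:ℤ)) (fun b hb => by rw [hF]; simp [hb])]
      rw [fin_id hx0 N]
      refine Finset.sum_congr rfl (fun m hm => ?_)
      rw [hF]
      simp [hm]
    -- Tannery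
    have h_tendsto : ∀ m : ℤ, Filter.Tendsto (fun N => F N m) Filter.atTop (nhds (g m)) := by
      intro m
      have hgb := (gb_tendsto hQ m).const_mul ((-1 : ℂ) ^ m * x ^ em m)
      refine Filter.Tendsto.congr' ?_ hgb
      rw [Filter.eventuallyEq_iff_exists_mem]
      refine ⟨{N | m.natAbs ≤ N}, Filter.mem_atTop _, fun N hN => ?_⟩
      simp only [Set.mem_setOf_eq] at hN
      have hmem : m ∈ Finset.Icc (-(N:ℤ)) (N:ℤ) := by
        rw [Finset.mem_Icc]; omega
      simp only [hF, hmem, if_true]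
    have h_bound : ∀ N : ℕ, ∀ m : ℤ, ‖F N m‖ ≤ K * ‖x‖ ^ em m := by
      intro N m
      rw [hF]
      by_cases hm : m ∈ Finset.Icc (-(N:ℤ)) (N:ℤ)
      · simp only [hm, if_true]
        rw [norm_mul, norm_mul, norm_neg_one_zpow, one_mul, norm_pow]
        have hkk : (m + N).toNat ≤ 2 * N := by
          rw [Finset.mem_Icc] at hm
          omega
        calc ‖x‖ ^ em m * ‖gb (x^5) (2*N) ((m + N).toNat)‖
            ≤ ‖x‖ ^ em m * (DD (x^5) / (cc (x^5) * cc (x^5))) :=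
              mul_le_mul_of_nonneg_left (gb_bound hQ hkk) (by positivity)
        _ = K * ‖x‖ ^ em m := by rw [hK]; ring
      · simp only [hm, if_false]
        rw [norm_zero]
        positivity
    have hsum_bound : Summable fun m : ℤ => K * ‖x‖ ^ em m := (summable_em hx).mul_left K
    have htan := tendsto_tsum_of_dominated_convergence (f := F) (g := g) hsum_bound h_tendsto
      (Filter.Eventually.of_forall h_bound)
    have hB : Filter.Tendsto
        (fun N => (∏ i ∈ Finset.range N, (1 - x ^ (5*i+3)))
          * ∏ i ∈ Finset.range N, (1 - x ^ (5*i+2))) Filter.atTop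
        (nhds ((∏' n : ℕ, (1 - x ^ (5 * n + 3))) * ∏' n : ℕ, (1 - x ^ (5 * n + 2)))) := by
      exact (tendsto_partial hx (e := fun n => 5*n+3)
          (fun n => by show n + 1 ≤ 5*n+3; omega)).mul
        (tendsto_partial hx (e := fun n => 5*n+2)
          (fun n => by show n + 1 ≤ 5*n+2; omega))
    have htan' : Filter.Tendsto
        (fun N => (∏ i ∈ Finset.range N, (1 - x ^ (5*i+3)))
          * ∏ i ∈ Finset.range N, (1 - x ^ (5*i+2))) Filter.atTop (nhds (∑' m : ℤ, g m)) := by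
      refine Filter.Tendsto.congr (fun N => h_eval N) htan
    have huniq := tendsto_nhds_unique htan' hB
    -- conclude
    have hphi := phiQ_ne_zero hQ
    have hg_sum : ∑' m : ℤ, g m = (∑' m : ℤ, (-1 : ℂ) ^ m * x ^ em m) * (phiQ (x^5))⁻¹ := by
      rw [hg, tsum_mul_right]
    rw [hg_sum] at huniq
    field_simp at huniq ⊢
    linear_combination huniq

end JTP
namespace JTP

lemma finsplit (x : ℂ) (N : ℕ) :
    ∏ k ∈ range (5*N), (1 - x^(k+1)) =
      (∏ n ∈ range N, (1 - x^(5*n+1))) * (∏ n ∈ range N, (1 - x^(5*n+2))) *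
      (∏ n ∈ range N, (1 - x^(5*n+3))) * (∏ n ∈ range N, (1 - x^(5*n+4))) *
      (∏ n ∈ range N, (1 - x^(5*n+5))) := by
  induction N with
  | zero => simp
  | succ N ih =>
    rw [show 5*(N+1) = (5*N)+1+1+1+1+1 by ring]
    rw [prod_range_succ, prod_range_succ, prod_range_succ, prod_range_succ, prod_range_succ, ih]
    rw [prod_range_succ (fun n => 1 - x^(5*n+1)), prod_range_succ (fun n => 1 - x^(5*n+2)),
      prod_range_succ (fun n => 1 - x^(5*n+3)), prod_range_succ (fun n => 1 - x^(5*n+4)),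
      prod_range_succ (fun n => 1 - x^(5*n+5))]
    ring

lemma phi_eq {x : ℂ} (hx : ‖x‖ < 1) :
    phiQ x = (∏' n : ℕ, (1 - x^(5*n+1))) * (∏' n : ℕ, (1 - x^(5*n+2))) *
      (∏' n : ℕ, (1 - x^(5*n+3))) * (∏' n : ℕ, (1 - x^(5*n+4))) *
      (∏' n : ℕ, (1 - x^(5*n+5))) := by
  have hu5 : Filter.Tendsto (fun N : ℕ => 5*N) Filter.atTop Filter.atTop := by
    rw [Filter.tendsto_atTop_atTop]
    intro b; exact ⟨b, fun a ha => by omega⟩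
  have hA : Filter.Tendsto (fun N : ℕ => ∏ k ∈ range (5*N), (1 - x^(k+1)))
      Filter.atTop (nhds (phiQ x)) :=
    (tendsto_partial hx (e := fun n => n+1) he1).comp hu5
  have t1 := tendsto_partial hx (e := fun n => 5*n+1) (fun n => by show n+1 ≤ 5*n+1; omega)
  have t2 := tendsto_partial hx (e := fun n => 5*n+2) (fun n => by show n+1 ≤ 5*n+2; omega)
  have t3 := tendsto_partial hx (e := fun n => 5*n+3) (fun n => by show n+1 ≤ 5*n+3; omega)
  have t4 := tendsto_partial hx (e := fun n => 5*n+4) (fun n => by show n+1 ≤ 5*n+4; omega)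
  have t5 := tendsto_partial hx (e := fun n => 5*n+5) (fun n => by show n+1 ≤ 5*n+5; omega)
  have hB := ((((t1.mul t2).mul t3).mul t4).mul t5)
  have hA' : Filter.Tendsto (fun N : ℕ => ∏ k ∈ range (5*N), (1 - x^(k+1)))
      Filter.atTop (nhds ((∏' n : ℕ, (1 - x^(5*n+1))) * (∏' n : ℕ, (1 - x^(5*n+2))) *
      (∏' n : ℕ, (1 - x^(5*n+3))) * (∏' n : ℕ, (1 - x^(5*n+4))) *
      (∏' n : ℕ, (1 - x^(5*n+5))))) := by
    refine Filter.Tendsto.congr (fun N => (finsplit x N).symm) hB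
  exact tendsto_nhds_unique hA hA'

lemma rrB_eq {x : ℂ} (hx : ‖x‖ < 1) :
    (∏' n : ℕ, ((1 - x^(5*n+4)) * (1 - x^(5*n+1)))⁻¹) =
      ((∏' n : ℕ, (1 - x^(5*n+4))) * (∏' n : ℕ, (1 - x^(5*n+1))))⁻¹ := by
  set u : ℕ → ℂ := fun n => (1 - x^(5*n+4)) * (1 - x^(5*n+1)) with hu
  have he4 : ∀ n : ℕ, n+1 ≤ 5*n+4 := fun n => by omega
  have he1' : ∀ n : ℕ, n+1 ≤ 5*n+1 := fun n => by omega
  have hne4 := term_ne_zero hx (e := fun n => 5*n+4) he4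
  have hne1 := term_ne_zero hx (e := fun n => 5*n+1) he1'
  have hu_ne : ∀ n, u n ≠ 0 := fun n => mul_ne_zero (hne4 n) (hne1 n)
  have Mu4 := multipliable hx (e := fun n => 5*n+4) he4
  have Mu1 := multipliable hx (e := fun n => 5*n+1) he1'
  have Mu : Multipliable u := Mu4.mul Mu1
  have hprod : ∏' n, u n = (∏' n : ℕ, (1 - x^(5*n+4))) * (∏' n : ℕ, (1 - x^(5*n+1))) :=
    Multipliable.tprod_mul Mu4 Mu1
  have hx1 : (0:ℝ) < 1 - ‖x‖ := by linarith
  -- bound for (u n)⁻¹ - 1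
  set z : ℕ → ℂ := fun n => (u n)⁻¹ - 1 with hz
  have hbz : ∀ n, ‖z n‖ ≤ (3 / (1-‖x‖)^2) * ‖x‖^(n+1) := by
    intro n
    have ha : ‖x^(5*n+4)‖ ≤ ‖x‖^(n+1) := norm_term_le hx he4 n
    have hb : ‖x^(5*n+1)‖ ≤ ‖x‖^(n+1) := norm_term_le hx he1' n
    have hxn1 : ‖x‖^(n+1) ≤ 1 := pow_le_one₀ (norm_nonneg x) hx.le
    have hnum : ‖1 - u n‖ ≤ 3 * ‖x‖^(n+1) := by
      have hexp : 1 - u n = x^(5*n+4) + x^(5*n+1) - x^(5*n+4) * x^(5*n+1) := by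
        rw [hu]; ring
      rw [hexp]
      calc ‖x^(5*n+4) + x^(5*n+1) - x^(5*n+4) * x^(5*n+1)‖
          ≤ ‖x^(5*n+4) + x^(5*n+1)‖ + ‖x^(5*n+4) * x^(5*n+1)‖ := norm_sub_le _ _
      _ ≤ (‖x^(5*n+4)‖ + ‖x^(5*n+1)‖) + ‖x^(5*n+4)‖ * ‖x^(5*n+1)‖ := by
          rw [norm_mul]
          exact add_le_add_left (norm_add_le _ _) _
      _ ≤ (‖x‖^(n+1) + ‖x‖^(n+1)) + ‖x‖^(n+1) * 1 := by
          refine add_le_add (add_le_add ha hb) ?_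
          exact mul_le_mul ha ((norm_term_le' hx he1' n).trans hx.le) (norm_nonneg _)
            (by positivity)
      _ = 3 * ‖x‖^(n+1) := by ring
    have hden : (1-‖x‖)^2 ≤ ‖u n‖ := by
      rw [hu, norm_mul]
      have d4 : 1 - ‖x‖ ≤ ‖1 - x^(5*n+4)‖ := by
        calc 1 - ‖x‖ ≤ 1 - ‖x^(5*n+4)‖ := by
              linarith [norm_term_le' hx he4 n]
        _ = ‖(1:ℂ)‖ - ‖x^(5*n+4)‖ := by simp
        _ ≤ ‖1 - x^(5*n+4)‖ := norm_sub_norm_le _ _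
      have d1 : 1 - ‖x‖ ≤ ‖1 - x^(5*n+1)‖ := by
        calc 1 - ‖x‖ ≤ 1 - ‖x^(5*n+1)‖ := by
              linarith [norm_term_le' hx he1' n]
        _ = ‖(1:ℂ)‖ - ‖x^(5*n+1)‖ := by simp
        _ ≤ ‖1 - x^(5*n+1)‖ := norm_sub_norm_le _ _
      rw [sq]
      exact mul_le_mul d4 d1 hx1.le (norm_nonneg _)
    have hzeq : z n = (1 - u n) / u n := by
      rw [hz]
      field_simp [hu_ne n]
    rw [hzeq, norm_div]
    rw [div_le_iff₀ (lt_of_lt_of_le (by positivity) hden)]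
    calc ‖1 - u n‖ ≤ 3 * ‖x‖^(n+1) := hnum
    _ = (3 / (1-‖x‖)^2 * ‖x‖^(n+1)) * (1-‖x‖)^2 := by
        field_simp [hx1.ne']
    _ ≤ 3 / (1-‖x‖)^2 * ‖x‖^(n+1) * ‖u n‖ := by
        refine mul_le_mul_of_nonneg_left hden (by positivity)
  have hz0 : Filter.Tendsto (fun n => ‖z n‖) Filter.atTop (nhds 0) := by
    have hb : Filter.Tendsto (fun n : ℕ => (3 / (1-‖x‖)^2) * ‖x‖^(n+1)) Filter.atTop (nhds 0) := by
      have := (tendsto_pow_atTop_nhds_zero_of_lt_one (norm_nonneg x) hx).const_mul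
        ((3 / (1-‖x‖)^2) * ‖x‖)
      simp only [mul_zero] at this
      refine this.congr (fun n => ?_)
      rw [pow_succ]
      ring
    refine squeeze_zero (fun n => norm_nonneg _) hbz hb
  have hev : ∀ᶠ n in Filter.atTop, ‖z n‖ ≤ 1/2 :=
    (hz0.eventually_lt_const (by norm_num : (0:ℝ) < 1/2)).mono fun n h => h.le
  have hlog : Summable fun n : ℕ => Complex.log ((u n)⁻¹) := by
    refine Summable.of_norm_bounded_eventually_nat (g :=
      fun n => (3/2) * ((3 / (1-‖x‖)^2) * ‖x‖^(n+1)))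
      (((summable_geom hx).mul_left _).mul_left _) ?_
    filter_upwards [hev] with n hn
    have hinv : (u n)⁻¹ = 1 + z n := by rw [hz]; ring
    rw [hinv]
    calc ‖Complex.log (1 + z n)‖ ≤ 3/2 * ‖z n‖ := Complex.norm_log_one_add_half_le_self hn
    _ ≤ 3/2 * ((3 / (1-‖x‖)^2) * ‖x‖^(n+1)) := by
        refine mul_le_mul_of_nonneg_left (hbz n) (by norm_num)
  have Minv : Multipliable fun n : ℕ => (u n)⁻¹ :=
    Complex.multipliable_of_summable_log hlog
  have hone : (∏' n, (u n)⁻¹) * (∏' n, u n) = 1 := by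
    rw [← Multipliable.tprod_mul Minv Mu, tprod_congr (fun n => inv_mul_cancel₀ (hu_ne n)), tprod_one]
  rw [hprod] at hone
  exact eq_inv_of_mul_eq_one_left hone

end JTP


theorem aPhi_part_zero_mod_three (q : ℂ) (hq : ‖q‖ < 1) :
    ∑' m : ℤ, (-1 : ℂ) ^ m * q ^ (3 * m * (15 * m + 3) / 2) =
      eulerPhi (q ^ 9) * rrB (q ^ 9) := by
  have hy : ‖q ^ 9‖ < 1 := by
    rw [norm_pow]
    exact pow_lt_one₀ (norm_nonneg q) hq (by norm_num)
  have hterm : ∀ m : ℤ, (-1 : ℂ) ^ m * q ^ (3 * m * (15 * m + 3) / 2)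
      = (-1 : ℂ) ^ m * (q ^ 9) ^ (JTP.em m) := by
    intro m
    congr 1
    have h := JTP.em_cast m
    have hdiv : 3 * m * (15 * m + 3) / 2 = 9 * (JTP.em m : ℤ) := by
      have h2 : 3 * m * (15 * m + 3) = 9 * (JTP.em m : ℤ) * 2 := by linear_combination (-9 : ℤ) * h
      rw [h2, Int.mul_ediv_cancel _ (by norm_num)]
    rw [hdiv, show (9 : ℤ) * (JTP.em m : ℤ) = ((9 * JTP.em m : ℕ) : ℤ) by push_cast; ring,
      zpow_natCast, pow_mul]
  rw [tsum_congr hterm, JTP.key_sum hy]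
  have hP5 : JTP.phiQ ((q ^ 9) ^ 5) = ∏' n : ℕ, (1 - (q ^ 9) ^ (5 * n + 5)) := by
    refine tprod_congr (fun n => ?_)
    rw [← pow_mul, show 5 * (n + 1) = 5 * n + 5 from by ring]
  have hsplit := JTP.phi_eq hy
  have hB := JTP.rrB_eq hy
  have h1 : (∏' n : ℕ, (1 - (q ^ 9) ^ (5 * n + 1))) ≠ 0 :=
    JTP.tprod_ne_zero hy (e := fun n => 5 * n + 1) (fun n => by show n + 1 ≤ 5 * n + 1; omega)
  have h4 : (∏' n : ℕ, (1 - (q ^ 9) ^ (5 * n + 4))) ≠ 0 :=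
    JTP.tprod_ne_zero hy (e := fun n => 5 * n + 4) (fun n => by show n + 1 ≤ 5 * n + 4; omega)
  have heuler : eulerPhi (q ^ 9) = JTP.phiQ (q ^ 9) := rfl
  have hrrB : rrB (q ^ 9) =
      ((∏' n : ℕ, (1 - (q ^ 9) ^ (5 * n + 4))) * ∏' n : ℕ, (1 - (q ^ 9) ^ (5 * n + 1)))⁻¹ := hB
  rw [heuler, hsplit, hrrB, hP5]
  field_simp
end

section
/- For every complex number q with |q| < 1, the sum of the terms of ∑_{k∈ℤ}(−1)^k q^{k(5k+1)/2} over those k congruent to 0 or 1 modulo 3 equals G(q³); that is, ∑_{k∈ℤ, k≡0 or 1 (mod 3)}(−1)^k q^{k(5k+1)/2} = G(q³). (Lemma 3.5: the part of b(q)φ(q) supported on exponents ≡ 0 mod 3 equals G(q³).) -/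
open scoped BigOperators
open Filter Finset

/-! ### Integer halving helper -/

lemma int_half (j : ℤ) : ∃ c : ℤ, 0 ≤ c ∧ j * (j - 1) = 2 * c ∧ j * (j - 1) / 2 = c := by
  have he : Even (j * (j - 1)) := by
    rcases Int.even_or_odd j with h | h
    · exact h.mul_right _
    · have h1 : Even (j - 1) := by rcases h with ⟨m, rfl⟩; exact ⟨m, by ring⟩
      exact h1.mul_left _
  obtain ⟨c, hc⟩ := he
  have h2 : j * (j - 1) = 2 * c := by rw [hc]; ring
  have hnn : 0 ≤ j * (j - 1) := by
    rcases le_or_gt 1 j with h | h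
    · exact mul_nonneg (by omega) (by omega)
    · calc (0:ℤ) ≤ (-j) * (-(j - 1)) := mul_nonneg (by omega) (by omega)
        _ = j * (j - 1) := by ring
  rw [h2] at hnn
  exact ⟨c, by omega, h2, by rw [h2]; omega⟩

/-! ### Nonvanishing -/

lemma one_add_ne {w : ℂ} (hw : ‖w‖ < 1) : 1 + w ≠ 0 := by
  intro h
  have hw1 : w = -1 := by linear_combination h
  rw [hw1] at hw
  simp at hw

lemma one_sub_pow_ne {x : ℂ} (hx : ‖x‖ < 1) (n : ℕ) : (1 : ℂ) - x ^ (n + 1) ≠ 0 := by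
  have : ‖-(x ^ (n+1))‖ < 1 := by
    rw [norm_neg, norm_pow]
    exact pow_lt_one₀ (norm_nonneg x) hx (Nat.succ_ne_zero n)
  have := one_add_ne this
  simpa [sub_eq_add_neg] using this

/-! ### Partial products and Gaussian binomials -/

noncomputable def Dq (x : ℂ) (M : ℕ) : ℂ := ∏ i ∈ Finset.range M, (1 - x ^ (i + 1))

lemma Dq_zero (x : ℂ) : Dq x 0 = 1 := by simp [Dq]

lemma Dq_succ (x : ℂ) (M : ℕ) : Dq x (M + 1) = Dq x M * (1 - x ^ (M + 1)) :=
  Finset.prod_range_succ _ _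

lemma Dq_ne {x : ℂ} (hx : ‖x‖ < 1) (M : ℕ) : Dq x M ≠ 0 :=
  Finset.prod_ne_zero_iff.mpr fun i _ => one_sub_pow_ne hx i

noncomputable def gb (x : ℂ) (m k : ℕ) : ℂ :=
  if k ≤ m then Dq x m / (Dq x k * Dq x (m - k)) else 0

lemma gb_zero {x : ℂ} (hx : ‖x‖ < 1) (m : ℕ) : gb x m 0 = 1 := by
  rw [gb, if_pos (Nat.zero_le m)]
  simp [Dq_zero, div_self (Dq_ne hx m)]

lemma gb_top {x : ℂ} (hx : ‖x‖ < 1) (m : ℕ) : gb x m m = 1 := by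
  rw [gb, if_pos le_rfl, Nat.sub_self, Dq_zero]
  simp [div_self (Dq_ne hx m)]

lemma gb_of_gt {x : ℂ} {m k : ℕ} (h : m < k) : gb x m k = 0 := by
  rw [gb, if_neg (by omega)]

lemma pascal {x : ℂ} (hx : ‖x‖ < 1) {m k : ℕ} (h1 : 1 ≤ k) (h2 : k ≤ m + 1) :
    gb x (m + 1) k = gb x m k + x ^ (m + 1 - k) * gb x m (k - 1) := by
  obtain ⟨k', rfl⟩ : ∃ k'', k = k'' + 1 := ⟨k - 1, by omega⟩
  rcases Nat.lt_or_ge m (k' + 1) with hlt | hge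
  · have hk' : k' = m := by omega
    subst hk'
    rw [show k' + 1 - (k' + 1) = 0 from by omega, show k' + 1 - 1 = k' from by omega,
      gb_top hx, gb_of_gt (by omega), gb_top hx]
    ring
  · obtain ⟨d, rfl⟩ : ∃ d, m = k' + 1 + d := ⟨m - (k' + 1), by omega⟩
    have e1 : k' + 1 + d + 1 - (k' + 1) = d + 1 := by omega
    have e2 : k' + 1 + d - (k' + 1) = d := by omega
    have e3 : k' + 1 + d - k' = d + 1 := by omega
    rw [gb, gb, gb, if_pos (by omega), if_pos (by omega), if_pos (by omega),
      Nat.add_sub_cancel, e1, e2, e3]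
    have hD1 := Dq_ne hx k'
    have hD2 := Dq_ne hx d
    have hD3 := Dq_ne hx (k' + 1 + d)
    have f1 : (1 : ℂ) - x ^ (k' + 1) ≠ 0 := one_sub_pow_ne hx k'
    have f2 : (1 : ℂ) - x ^ (d + 1) ≠ 0 := one_sub_pow_ne hx d
    have hs1 : Dq x (k' + 1 + d + 1) = Dq x (k' + 1 + d) * (1 - x ^ (k' + 1 + d + 1)) :=
      Dq_succ x _
    have hs2 : Dq x (k' + 1) = Dq x k' * (1 - x ^ (k' + 1)) := Dq_succ x _
    have hs3 : Dq x (d + 1) = Dq x d * (1 - x ^ (d + 1)) := Dq_succ x _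
    rw [hs1, hs2, hs3]
    field_simp
    ring

/-! ### q-binomial theorem -/

lemma two_mul_choose_two (k : ℕ) : 2 * k.choose 2 = k * (k - 1) := by
  induction k with
  | zero => simp
  | succ k ih =>
    have h : (k + 1).choose 2 = k + k.choose 2 := by
      rw [Nat.choose_succ_succ, Nat.choose_one_right]
    rw [h, Nat.mul_add, ih]
    cases k with
    | zero => simp
    | succ k' => simp only [Nat.add_sub_cancel]; ring

lemma qbinom {x : ℂ} (hx : ‖x‖ < 1) (z : ℂ) :
    ∀ m : ℕ, ∏ i ∈ Finset.range m, (1 + z * x ^ i)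
      = ∑ k ∈ Finset.range (m + 1), gb x m k * x ^ (k.choose 2) * z ^ k := by
  intro m
  induction m with
  | zero => simp [gb_zero hx]
  | succ m ih =>
    have key : ∀ k ∈ Finset.range (m + 1),
        gb x (m + 1) (k + 1) * x ^ ((k + 1).choose 2) * z ^ (k + 1)
          = gb x m (k + 1) * x ^ ((k + 1).choose 2) * z ^ (k + 1)
            + (gb x m k * x ^ (k.choose 2) * z ^ k) * (z * x ^ m) := by
      intro k hk
      have hk' : k < m + 1 := Finset.mem_range.1 hk
      rw [pascal hx (by omega) (by omega), Nat.add_sub_cancel]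
      have hm1 : m + 1 - (k + 1) = m - k := by omega
      rw [hm1]
      have hc : (k + 1).choose 2 = k + k.choose 2 := by
        rw [Nat.choose_succ_succ, Nat.choose_one_right]
      have hpow : x ^ (m - k) * x ^ ((k + 1).choose 2) = x ^ (k.choose 2) * x ^ m := by
        rw [← pow_add, ← pow_add]
        congr 1
        omega
      linear_combination gb x m k * z ^ (k + 1) * hpow
    have hext : ∑ k ∈ Finset.range (m + 1), gb x m k * x ^ (k.choose 2) * z ^ k
        = ∑ k ∈ Finset.range (m + 1 + 1), gb x m k * x ^ (k.choose 2) * z ^ k := by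
      rw [Finset.sum_range_succ _ (m + 1), gb_of_gt (show m < m + 1 by omega)]
      ring
    rw [Finset.prod_range_succ, ih]
    conv_lhs => rw [mul_add, mul_one, Finset.sum_mul, hext,
      Finset.sum_range_succ' (fun k => gb x m k * x ^ (k.choose 2) * z ^ k) (m + 1)]
    conv_rhs => rw [Finset.sum_range_succ' (fun k => gb x (m + 1) k * x ^ (k.choose 2) * z ^ k) (m + 1)]
    rw [Finset.sum_congr rfl key, Finset.sum_add_distrib, gb_zero hx, gb_zero hx]
    ring

/-! ### Finite Jacobi triple product -/

noncomputable def jt (x z : ℂ) (j : ℤ) : ℂ := z ^ j * x ^ (j * (j - 1) / 2).toNat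

lemma lhsL {x z : ℂ} (hx0 : x ≠ 0) (hz : z ≠ 0) (N : ℕ) :
    x ^ (∑ i ∈ Finset.range N, (N - i)) * ∏ i ∈ Finset.range (2 * N), (1 + z / x ^ N * x ^ i)
      = z ^ N * ∏ n ∈ Finset.range N, ((1 + z * x ^ n) * (1 + z⁻¹ * x ^ (n + 1))) := by
  have hxN : (x : ℂ) ^ N ≠ 0 := pow_ne_zero _ hx0
  rw [two_mul, Finset.prod_range_add]
  have h2 : ∀ i ∈ Finset.range N, 1 + z / x ^ N * x ^ (N + i) = 1 + z * x ^ i := by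
    intro i _
    rw [pow_add]
    field_simp
  rw [Finset.prod_congr rfl h2]
  rw [← Finset.prod_pow_eq_pow_sum]
  rw [← mul_assoc, ← Finset.prod_mul_distrib]
  have h3 : ∀ i ∈ Finset.range N, x ^ (N - i) * (1 + z / x ^ N * x ^ i)
      = z * (1 + z⁻¹ * x ^ (N - i)) := by
    intro i hi
    have hiN : i < N := Finset.mem_range.1 hi
    have hxx : x ^ (N - i) * x ^ i = x ^ N := by rw [← pow_add]; congr 1; omega
    have h4 : x ^ (N - i) * (z / x ^ N * x ^ i) = z := by
      rw [div_mul_eq_mul_div, mul_div_assoc']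
      rw [show x ^ (N - i) * (z * x ^ i) = z * (x ^ (N - i) * x ^ i) from by ring, hxx]
      field_simp
    rw [mul_add, mul_one, h4, mul_add, mul_one, mul_inv_cancel_left₀ hz]
    ring
  rw [Finset.prod_congr rfl h3, Finset.prod_mul_distrib, Finset.prod_const]
  have h5 : ∏ i ∈ Finset.range N, (1 + z⁻¹ * x ^ (N - i))
      = ∏ n ∈ Finset.range N, (1 + z⁻¹ * x ^ (n + 1)) := by
    rw [← Finset.prod_range_reflect (fun n => 1 + z⁻¹ * x ^ (n + 1)) N]
    refine Finset.prod_congr rfl fun i hi => ?_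
    have hiN : i < N := Finset.mem_range.1 hi
    have h6 : N - 1 - i + 1 = N - i := by omega
    rw [h6]
  rw [h5, Finset.prod_mul_distrib, Finset.card_range]
  ring

lemma two_mul_E (N : ℕ) : 2 * (∑ i ∈ Finset.range N, (N - i)) = N * (N + 1) := by
  have h1 : ∑ i ∈ Finset.range N, (N - i) = ∑ i ∈ Finset.range N, (i + 1) := by
    rw [← Finset.sum_range_reflect (fun i => i + 1) N]
    exact Finset.sum_congr rfl fun i hi => by
      have := Finset.mem_range.1 hi; omega
  rw [h1, Finset.sum_add_distrib, Finset.sum_const, Finset.card_range, smul_eq_mul, mul_one,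
    Nat.mul_add, mul_comm 2 (∑ i ∈ Finset.range N, i), Finset.sum_range_id_mul_two N]
  cases N with
  | zero => simp
  | succ n => simp only [Nat.add_sub_cancel]; ring

lemma finJTP {x z : ℂ} (hx : ‖x‖ < 1) (hx0 : x ≠ 0) (hz : z ≠ 0) (N : ℕ) :
    ∏ n ∈ Finset.range N, ((1 + z * x ^ n) * (1 + z⁻¹ * x ^ (n + 1)))
      = ∑ k ∈ Finset.range (2 * N + 1), gb x (2 * N) k * jt x z ((k : ℤ) - N) := by
  have hzN : (z : ℂ) ^ N ≠ 0 := pow_ne_zero _ hz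
  apply mul_left_cancel₀ hzN
  rw [← lhsL hx0 hz N, qbinom hx (z / x ^ N) (2 * N), Finset.mul_sum, Finset.mul_sum]
  refine Finset.sum_congr rfl fun k hk => ?_
  have hk2N : k ≤ 2 * N := by have := Finset.mem_range.1 hk; omega
  obtain ⟨c, hc0, hc2, hcdiv⟩ := int_half ((k : ℤ) - N)
  have hE2 := two_mul_E N
  have hC2 := two_mul_choose_two k
  -- natural exponent identity
  have hnat : (∑ i ∈ Finset.range N, (N - i)) + k.choose 2 = c.toNat + N * k := by
    have hcc : ((c.toNat : ℤ)) = c := Int.toNat_of_nonneg hc0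
    have h1 : (2 : ℤ) * (∑ i ∈ Finset.range N, (N - i) : ℕ) = (N : ℤ) * (N + 1) := by
      exact_mod_cast congrArg (Nat.cast : ℕ → ℤ) hE2
    have h2 : (2 : ℤ) * (k.choose 2 : ℕ) = (k : ℤ) * (k - 1) := by
      have hk1 : 1 ≤ k ∨ k = 0 := by omega
      rcases hk1 with hk1 | rfl
      · have : ((k * (k - 1) : ℕ) : ℤ) = (k : ℤ) * ((k : ℤ) - 1) := by
          push_cast [Nat.cast_sub hk1]; ring
        rw [← this]; exact_mod_cast congrArg (Nat.cast : ℕ → ℤ) hC2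
      · simp
    have hr : (N : ℤ) * (N + 1) + (k : ℤ) * (k - 1)
        = ((k : ℤ) - N) * (((k : ℤ) - N) - 1) + 2 * (N * k) := by ring
    have : (2 : ℤ) * ((∑ i ∈ Finset.range N, (N - i) : ℕ) + (k.choose 2 : ℕ))
        = 2 * (c + (N : ℤ) * k) := by
      rw [mul_add, h1, h2, hr, hc2]; ring
    have hfin : ((∑ i ∈ Finset.range N, (N - i) : ℕ) : ℤ) + (k.choose 2 : ℕ)
        = c + (N : ℤ) * k := by linarith
    have : ((∑ i ∈ Finset.range N, (N - i) : ℕ) : ℤ) + (k.choose 2 : ℕ)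
        = (c.toNat : ℤ) + (N : ℤ) * k := by rw [hcc]; exact hfin
    exact_mod_cast this
  -- now the complex identity
  rw [jt, hcdiv]
  have hz1 : z ^ N * z ^ ((k : ℤ) - N) = z ^ k := by
    rw [← zpow_natCast z N, ← zpow_add₀ hz, ← zpow_natCast z k]
    congr 1
    ring
  have hxx : x ^ (∑ i ∈ Finset.range N, (N - i)) * x ^ (k.choose 2)
      = x ^ (c.toNat) * x ^ (N * k) := by
    rw [← pow_add, ← pow_add, hnat]
  rw [div_pow, div_eq_mul_inv]
  have hxNk : ((x ^ N) ^ k)⁻¹ ^ 1 * x ^ (N * k) = 1 := by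
    rw [pow_one, ← pow_mul]
    exact inv_mul_cancel₀ (pow_ne_zero _ hx0)
  calc x ^ (∑ i ∈ Finset.range N, (N - i)) * (gb x (2 * N) k * x ^ k.choose 2 *
        (z ^ k * ((x ^ N) ^ k)⁻¹))
      = gb x (2 * N) k * (x ^ (∑ i ∈ Finset.range N, (N - i)) * x ^ (k.choose 2)) *
        z ^ k * ((x ^ N) ^ k)⁻¹ := by ring
    _ = gb x (2 * N) k * (x ^ (c.toNat) * x ^ (N * k)) * z ^ k * ((x ^ N) ^ k)⁻¹ := by
        rw [hxx]
    _ = gb x (2 * N) k * x ^ (c.toNat) * z ^ k * (((x ^ N) ^ k)⁻¹ ^ 1 * x ^ (N * k)) := by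
        ring
    _ = gb x (2 * N) k * x ^ (c.toNat) * z ^ k := by rw [hxNk, mul_one]
    _ = gb x (2 * N) k * x ^ (c.toNat) * (z ^ N * z ^ ((k : ℤ) - N)) := by rw [hz1]
    _ = z ^ N * (gb x (2 * N) k * (z ^ ((k : ℤ) - N) * x ^ c.toNat)) := by ring

/-! ### tsum form of the finite sum -/

noncomputable def uu (x z : ℂ) (N : ℕ) (j : ℤ) : ℂ :=
  if -(N : ℤ) ≤ j then gb x (2 * N) (j + N).toNat * jt x z j else 0

lemma tsum_uu {x z : ℂ} (N : ℕ) :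
    ∑' j : ℤ, uu x z N j
      = ∑ k ∈ Finset.range (2 * N + 1), gb x (2 * N) k * jt x z ((k : ℤ) - N) := by
  classical
  have hinj : Function.Injective (fun k : ℕ => (k : ℤ) - N) := by
    intro a b h
    have h' : (a : ℤ) - N = (b : ℤ) - N := h
    omega
  set s : Finset ℤ := Finset.map ⟨fun k : ℕ => (k : ℤ) - N, hinj⟩
    (Finset.range (2 * N + 1)) with hs
  have hmem : ∀ j : ℤ, j ∈ s ↔ ∃ k : ℕ, k < 2 * N + 1 ∧ (k : ℤ) - N = j := by
    intro j
    rw [hs]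
    simp only [Finset.mem_map, Function.Embedding.coeFn_mk, Finset.mem_range]
  have h0 : ∀ j ∉ s, uu x z N j = 0 := by
    intro j hj
    rw [hmem] at hj
    push_neg at hj
    by_cases hle : -(N : ℤ) ≤ j
    · rcases le_or_gt j (N : ℤ) with hje | hje
      · exact ((hj (j + N).toNat (by omega) (by omega))).elim
      · rw [uu, if_pos hle, gb_of_gt (show 2 * N < (j + N).toNat by omega), zero_mul]
    · rw [uu, if_neg hle]
  rw [tsum_eq_sum h0, hs, Finset.sum_map]
  refine Finset.sum_congr rfl fun k hk => ?_
  have hk' : k < 2 * N + 1 := Finset.mem_range.1 hk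
  simp only [Function.Embedding.coeFn_mk]
  rw [uu, if_pos (by omega)]
  congr 2
  omega

/-! ### Bounds -/

lemma geo_sum_le {r : ℝ} (h0 : 0 ≤ r) (h1 : r < 1) (M : ℕ) :
    ∑ i ∈ Finset.range M, r ^ (i + 1) ≤ r * (1 - r)⁻¹ := by
  have hsum : Summable (fun i : ℕ => r ^ (i + 1)) := by
    refine ((summable_geometric_of_lt_one h0 h1).mul_left r).congr fun i => ?_
    rw [← pow_succ']
  have hle : ∑ i ∈ Finset.range M, r ^ (i + 1) ≤ ∑' i : ℕ, r ^ (i + 1) :=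
    Summable.sum_le_tsum _ (fun i _ => pow_nonneg h0 _) hsum
  have heq : ∑' i : ℕ, r ^ (i + 1) = r * (1 - r)⁻¹ := by
    have h2 : ∑' i : ℕ, r ^ (i + 1) = ∑' i : ℕ, r * r ^ i := by
      refine tsum_congr fun i => ?_
      rw [← pow_succ']
    rw [h2, tsum_mul_left, tsum_geometric_of_lt_one h0 h1]
  linarith [hle, heq.le]

lemma Dq_norm_le {x : ℂ} (hx : ‖x‖ < 1) (M : ℕ) :
    ‖Dq x M‖ ≤ Real.exp (‖x‖ * (1 - ‖x‖)⁻¹) := by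
  have h0 : (0 : ℝ) ≤ ‖x‖ := norm_nonneg x
  rw [Dq, norm_prod]
  calc ∏ i ∈ Finset.range M, ‖1 - x ^ (i + 1)‖
      ≤ ∏ i ∈ Finset.range M, Real.exp (‖x‖ ^ (i + 1)) := by
        refine Finset.prod_le_prod (fun i _ => norm_nonneg _) fun i _ => ?_
        calc ‖1 - x ^ (i + 1)‖ ≤ ‖(1 : ℂ)‖ + ‖x ^ (i + 1)‖ := norm_sub_le _ _
          _ = ‖x‖ ^ (i + 1) + 1 := by rw [norm_one, norm_pow]; ring
          _ ≤ Real.exp (‖x‖ ^ (i + 1)) := Real.add_one_le_exp _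
    _ = Real.exp (∑ i ∈ Finset.range M, ‖x‖ ^ (i + 1)) := by rw [Real.exp_sum]
    _ ≤ Real.exp (‖x‖ * (1 - ‖x‖)⁻¹) := Real.exp_le_exp.2 (geo_sum_le h0 hx M)

lemma exp_le_one_sub {a t : ℝ} (h0 : 0 ≤ t) (hta : t ≤ a) (ha : a < 1) :
    Real.exp (-(t * (1 - a)⁻¹)) ≤ 1 - t := by
  have ha1 : 0 < 1 - a := by linarith
  have hinvpos : 0 < (1 - a)⁻¹ := by positivity
  have hu0 : 0 ≤ t * (1 - a)⁻¹ := mul_nonneg h0 hinvpos.le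
  set u := t * (1 - a)⁻¹ with hu
  have h3 : 0 < 1 + u := by linarith
  have h1 : Real.exp (-u) ≤ (1 + u)⁻¹ := by
    rw [Real.exp_neg]
    refine inv_anti₀ h3 ?_
    have := Real.add_one_le_exp u
    linarith
  have hinv : (1 - a)⁻¹ * (1 - a) = 1 := inv_mul_cancel₀ (by linarith)
  have h2 : 1 ≤ (1 - t) * (1 + u) := by
    rw [hu]
    nlinarith [mul_nonneg (mul_nonneg h0 hinvpos.le) (sub_nonneg.2 hta)]
  have h4 := mul_le_mul_of_nonneg_right h2 (inv_nonneg.2 h3.le)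
  rw [one_mul, mul_assoc, mul_inv_cancel₀ (ne_of_gt h3), mul_one] at h4
  exact h1.trans h4

lemma Dq_norm_ge {x : ℂ} (hx : ‖x‖ < 1) (M : ℕ) :
    Real.exp (-(‖x‖ * (1 - ‖x‖)⁻¹ * (1 - ‖x‖)⁻¹)) ≤ ‖Dq x M‖ := by
  have h0 : (0 : ℝ) ≤ ‖x‖ := norm_nonneg x
  rw [Dq, norm_prod]
  have key : ∀ i : ℕ, Real.exp (-(‖x‖ ^ (i + 1) * (1 - ‖x‖)⁻¹)) ≤ ‖1 - x ^ (i + 1)‖ := by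
    intro i
    have ht0 : (0 : ℝ) ≤ ‖x‖ ^ (i + 1) := pow_nonneg h0 _
    have hta : ‖x‖ ^ (i + 1) ≤ ‖x‖ := by
      calc ‖x‖ ^ (i + 1) ≤ ‖x‖ ^ 1 := pow_le_pow_of_le_one h0 hx.le (by omega)
        _ = ‖x‖ := pow_one _
    have h1 : Real.exp (-(‖x‖ ^ (i + 1) * (1 - ‖x‖)⁻¹)) ≤ 1 - ‖x‖ ^ (i + 1) :=
      exp_le_one_sub ht0 hta hx
    refine h1.trans ?_
    calc 1 - ‖x‖ ^ (i + 1) = ‖(1 : ℂ)‖ - ‖x ^ (i + 1)‖ := by rw [norm_one, norm_pow]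
      _ ≤ ‖1 - x ^ (i + 1)‖ := norm_sub_norm_le _ _
  calc Real.exp (-(‖x‖ * (1 - ‖x‖)⁻¹ * (1 - ‖x‖)⁻¹))
      ≤ Real.exp (-((∑ i ∈ Finset.range M, ‖x‖ ^ (i + 1)) * (1 - ‖x‖)⁻¹)) := by
        refine Real.exp_le_exp.2 ?_
        have := geo_sum_le h0 hx M
        have hpos : (0 : ℝ) ≤ (1 - ‖x‖)⁻¹ := inv_nonneg.2 (by linarith)
        nlinarith
    _ = ∏ i ∈ Finset.range M, Real.exp (-(‖x‖ ^ (i + 1) * (1 - ‖x‖)⁻¹)) := by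
        rw [← Real.exp_sum]
        congr 1
        simp [Finset.sum_mul]
    _ ≤ ∏ i ∈ Finset.range M, ‖1 - x ^ (i + 1)‖ :=
        Finset.prod_le_prod (fun i _ => (Real.exp_pos _).le) fun i _ => key i

noncomputable def Cb (x : ℂ) : ℝ :=
  Real.exp (‖x‖ * (1 - ‖x‖)⁻¹)
    / (Real.exp (-(‖x‖ * (1 - ‖x‖)⁻¹ * (1 - ‖x‖)⁻¹))
        * Real.exp (-(‖x‖ * (1 - ‖x‖)⁻¹ * (1 - ‖x‖)⁻¹)))

lemma Cb_pos (x : ℂ) : 0 < Cb x := by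
  rw [Cb]
  positivity

lemma gb_norm_le {x : ℂ} (hx : ‖x‖ < 1) (m k : ℕ) : ‖gb x m k‖ ≤ Cb x := by
  rcases le_or_gt k m with h | h
  · rw [gb, if_pos h, norm_div, norm_mul, Cb]
    refine div_le_div₀ (Real.exp_pos _).le (Dq_norm_le hx m) (by positivity) ?_
    exact mul_le_mul (Dq_norm_ge hx k) (Dq_norm_ge hx (m - k)) (Real.exp_pos _).le
      (norm_nonneg _)
  · rw [gb_of_gt h, norm_zero]
    exact (Cb_pos x).le

lemma uu_norm_le {x z : ℂ} (hx : ‖x‖ < 1) (N : ℕ) (j : ℤ) :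
    ‖uu x z N j‖ ≤ Cb x * ‖jt x z j‖ := by
  rw [uu]
  split_ifs with h
  · rw [norm_mul]
    exact mul_le_mul_of_nonneg_right (gb_norm_le hx _ _) (norm_nonneg _)
  · rw [norm_zero]
    exact mul_nonneg (Cb_pos x).le (norm_nonneg _)

/-! ### Summability of jt -/

lemma jt_norm (x z : ℂ) (j : ℤ) :
    ‖jt x z j‖ = ‖z‖ ^ j * ‖x‖ ^ (j * (j - 1) / 2).toNat := by
  rw [jt, norm_mul, norm_zpow, norm_pow]

lemma toNat_half_succ (n : ℕ) :
    ((((n : ℤ) + 1) * (((n : ℤ) + 1) - 1)) / 2).toNat = (((n : ℤ) * ((n : ℤ) - 1)) / 2).toNat + n := by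
  obtain ⟨c1, hc10, hc12, hc1d⟩ := int_half ((n : ℤ) + 1)
  obtain ⟨c2, hc20, hc22, hc2d⟩ := int_half (n : ℤ)
  rw [hc1d, hc2d]
  have hr : ((n : ℤ) + 1) * (((n : ℤ) + 1) - 1) = (n : ℤ) * ((n : ℤ) - 1) + 2 * n := by ring
  have : 2 * c1 = 2 * c2 + 2 * n := by rw [← hc12, ← hc22]; linarith [hr]
  omega

lemma toNat_half_negsucc (n : ℕ) :
    (((-(n : ℤ) - 1) * ((-(n : ℤ) - 1) - 1)) / 2).toNat
      = (((-(n : ℤ)) * ((-(n : ℤ)) - 1)) / 2).toNat + (n + 1) := by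
  obtain ⟨c1, hc10, hc12, hc1d⟩ := int_half (-(n : ℤ) - 1)
  obtain ⟨c2, hc20, hc22, hc2d⟩ := int_half (-(n : ℤ))
  rw [hc1d, hc2d]
  have hr : (-(n : ℤ) - 1) * ((-(n : ℤ) - 1) - 1)
      = (-(n : ℤ)) * ((-(n : ℤ)) - 1) + 2 * (n + 1) := by ring
  have : 2 * c1 = 2 * c2 + 2 * (n + 1) := by rw [← hc12, ← hc22]; linarith [hr]
  omega

lemma summable_jt_norm {x z : ℂ} (hx : ‖x‖ < 1) (hz : z ≠ 0) :
    Summable (fun j : ℤ => ‖jt x z j‖) := by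
  have hz0 : 0 < ‖z‖ := norm_pos_iff.2 hz
  have hxt : Filter.Tendsto (fun n : ℕ => ‖x‖ ^ n) atTop (nhds 0) :=
    tendsto_pow_atTop_nhds_zero_of_lt_one (norm_nonneg x) hx
  apply Summable.of_nat_of_neg
  · -- positive part
    apply summable_of_ratio_norm_eventually_le (r := 1/2) (by norm_num)
    have hev : ∀ᶠ n : ℕ in atTop, ‖z‖ * ‖x‖ ^ n ≤ 1/2 := by
      have ht : Filter.Tendsto (fun n : ℕ => ‖z‖ * ‖x‖ ^ n) atTop (nhds 0) := by
        simpa using hxt.const_mul ‖z‖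
      exact ht.eventually_le_const (by norm_num)
    filter_upwards [hev] with n h
    have hrat : ‖jt x z ((n : ℤ) + 1)‖ = (‖z‖ * ‖x‖ ^ n) * ‖jt x z (n : ℤ)‖ := by
      rw [jt_norm, jt_norm, toNat_half_succ, pow_add]
      rw [show ((n : ℤ) + 1) = ((n + 1 : ℕ) : ℤ) by push_cast; ring]
      rw [zpow_natCast, zpow_natCast, pow_succ]
      ring
    have h1 : ((n : ℤ) + 1) = ((n + 1 : ℕ) : ℤ) := by push_cast; ring
    rw [Real.norm_of_nonneg (norm_nonneg _), Real.norm_of_nonneg (norm_nonneg _)]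
    rw [← h1, hrat]
    have hnn : (0 : ℝ) ≤ ‖jt x z (n : ℤ)‖ := norm_nonneg _
    nlinarith
  · -- negative part
    apply summable_of_ratio_norm_eventually_le (r := 1/2) (by norm_num)
    have hev : ∀ᶠ n : ℕ in atTop, ‖z‖⁻¹ * ‖x‖ ^ (n + 1) ≤ 1/2 := by
      have ht : Filter.Tendsto (fun n : ℕ => ‖z‖⁻¹ * ‖x‖ ^ (n + 1)) atTop (nhds 0) := by
        have h2 : Filter.Tendsto (fun n : ℕ => ‖x‖ ^ (n + 1)) atTop (nhds 0) :=
          hxt.comp (tendsto_add_atTop_nat 1)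
        simpa using h2.const_mul ‖z‖⁻¹
      exact ht.eventually_le_const (by norm_num)
    filter_upwards [hev] with n h
    have hrat : ‖jt x z (-((n + 1 : ℕ) : ℤ))‖
        = (‖z‖⁻¹ * ‖x‖ ^ (n + 1)) * ‖jt x z (-(n : ℤ))‖ := by
      rw [show -(((n + 1 : ℕ)) : ℤ) = -(n : ℤ) - 1 by push_cast; ring]
      rw [jt_norm, jt_norm, toNat_half_negsucc, pow_add]
      rw [show (-(n : ℤ) - 1) = -(n : ℤ) + (-1) by ring]
      rw [zpow_add₀ (ne_of_gt hz0), zpow_neg_one]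
      ring
    rw [Real.norm_of_nonneg (norm_nonneg _), Real.norm_of_nonneg (norm_nonneg _), hrat]
    have hnn : (0 : ℝ) ≤ ‖jt x z (-(n : ℤ))‖ := norm_nonneg _
    nlinarith

/-! ### Multipliability -/

lemma mult_one_add {w : ℕ → ℂ} (hs : Summable w) (hn : ∀ n, 1 + w n ≠ 0) :
    Multipliable fun n => 1 + w n := by
  have hlog : Summable fun n => Complex.log (1 + w n) := by
    have h2 : ∀ᶠ n : ℕ in atTop, ‖w n‖ ≤ 1/2 := by
      have hn2 : Filter.Tendsto (fun n => ‖w n‖) atTop (nhds 0) := by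
        simpa using hs.tendsto_atTop_zero.norm
      exact hn2.eventually_le_const (by norm_num)
    have hev : ∀ᶠ n in Filter.cofinite, ‖Complex.log (1 + w n)‖ ≤ (3/2) * ‖w n‖ := by
      rw [Nat.cofinite_eq_atTop]
      filter_upwards [h2] with n h using Complex.norm_log_one_add_half_le_self h
    exact Summable.of_norm_bounded_eventually (hs.norm.mul_left (3/2)) hev
  exact multipliable_one_add_of_summable hs.norm

/-! ### The Jacobi triple product -/

theorem jtp {x z : ℂ} (hx : ‖x‖ < 1) (hx0 : x ≠ 0) (hz : z ≠ 0)
    (h1 : ∀ n : ℕ, 1 + z * x ^ n ≠ 0) (h2 : ∀ n : ℕ, 1 + z⁻¹ * x ^ (n + 1) ≠ 0) :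
    HasSum (jt x z)
      (∏' n : ℕ, ((1 - x ^ (n + 1)) * ((1 + z * x ^ n) * (1 + z⁻¹ * x ^ (n + 1))))) := by
  have hgeom : Summable fun n : ℕ => x ^ n := summable_geometric_of_norm_lt_one hx
  have hsD : Summable fun n : ℕ => -(x ^ (n + 1)) := by
    refine (hgeom.mul_left (-x)).congr fun n => ?_
    rw [pow_succ']; ring
  have hnD : ∀ n : ℕ, 1 + -(x ^ (n + 1)) ≠ 0 := by
    intro n
    have := one_sub_pow_ne hx n
    simpa [sub_eq_add_neg] using this
  have hD : Multipliable fun n : ℕ => 1 - x ^ (n + 1) := by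
    refine (mult_one_add hsD hnD).congr fun n => ?_
    rw [sub_eq_add_neg]
  have hM1 : Multipliable fun n : ℕ => 1 + z * x ^ n := mult_one_add (hgeom.mul_left z) h1
  have hsM2 : Summable fun n : ℕ => z⁻¹ * x ^ (n + 1) := by
    refine (hgeom.mul_left (z⁻¹ * x)).congr fun n => ?_
    rw [pow_succ']; ring
  have hM2 : Multipliable fun n : ℕ => 1 + z⁻¹ * x ^ (n + 1) := mult_one_add hsM2 h2
  have hP2 : Multipliable fun n : ℕ => (1 + z * x ^ n) * (1 + z⁻¹ * x ^ (n + 1)) := hM1.mul hM2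
  set Dinf := ∏' n : ℕ, (1 - x ^ (n + 1)) with hDinf
  have hDt : Filter.Tendsto (fun M => Dq x M) atTop (nhds Dinf) := by
    have := hD.hasProd.tendsto_prod_nat
    simpa [Dq] using this
  have hDne : Dinf ≠ 0 := by
    intro h
    have hnorm : Filter.Tendsto (fun M => ‖Dq x M‖) atTop (nhds ‖Dinf‖) := hDt.norm
    have hge : Real.exp (-(‖x‖ * (1 - ‖x‖)⁻¹ * (1 - ‖x‖)⁻¹)) ≤ ‖Dinf‖ :=
      ge_of_tendsto hnorm (Filter.Eventually.of_forall fun M => Dq_norm_ge hx M)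
    rw [h, norm_zero] at hge
    exact (Real.exp_pos _).not_ge hge
  have hjnorm := summable_jt_norm hx hz (x := x)
  have hbound : Summable fun j : ℤ => Cb x * ‖jt x z j‖ := hjnorm.mul_left _
  have hlim : ∀ j : ℤ, Filter.Tendsto (fun N => uu x z N j) atTop
      (nhds (Dinf⁻¹ * jt x z j)) := by
    intro j
    have ht1 : Filter.Tendsto (fun N : ℕ => 2 * N) atTop atTop :=
      Filter.tendsto_atTop_atTop.2 fun b => ⟨b, fun a ha => by omega⟩
    have ht2 : Filter.Tendsto (fun N : ℕ => ((j : ℤ) + N).toNat) atTop atTop := by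
      refine Filter.tendsto_atTop_atTop.2 fun b => ⟨b + j.natAbs, fun a ha => by omega⟩
    have ht3 : Filter.Tendsto (fun N : ℕ => ((N : ℤ) - j).toNat) atTop atTop := by
      refine Filter.tendsto_atTop_atTop.2 fun b => ⟨b + j.natAbs, fun a ha => by omega⟩
    have hDinv : Filter.Tendsto
        (fun N : ℕ => Dq x (2 * N) / (Dq x ((j + N).toNat) * Dq x ((N : ℤ) - j).toNat))
        atTop (nhds (Dinf / (Dinf * Dinf))) := by
      exact Filter.Tendsto.div ((hDt.comp ht1)) ((hDt.comp ht2).mul (hDt.comp ht3))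
        (mul_ne_zero hDne hDne)
    have hval : Dinf / (Dinf * Dinf) = Dinf⁻¹ := by field_simp
    have hev : ∀ᶠ N : ℕ in atTop,
        (Dq x (2 * N) / (Dq x ((j + N).toNat) * Dq x ((N : ℤ) - j).toNat)) * jt x z j
          = uu x z N j := by
      filter_upwards [Filter.eventually_ge_atTop j.natAbs] with N hN
      have harg : 2 * N - ((j + N).toNat) = ((N : ℤ) - j).toNat := by omega
      rw [uu, if_pos (by omega), gb, if_pos (by omega), harg]
    have := (hDinv.mul_const (jt x z j)).congr' hev
    rwa [hval] at this
  have hdom := tendsto_tsum_of_dominated_convergence hbound hlim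
    (Filter.Eventually.of_forall fun N j => uu_norm_le hx N j)
  have heq1 : (fun N => ∑' j : ℤ, uu x z N j)
      = fun N => ∏ n ∈ Finset.range N, ((1 + z * x ^ n) * (1 + z⁻¹ * x ^ (n + 1))) :=
    funext fun N => by rw [tsum_uu, ← finJTP hx hx0 hz]
  rw [heq1] at hdom
  have hP2t := hP2.hasProd.tendsto_prod_nat
  have huniq : ∑' j : ℤ, Dinf⁻¹ * jt x z j
      = ∏' n : ℕ, ((1 + z * x ^ n) * (1 + z⁻¹ * x ^ (n + 1))) :=
    tendsto_nhds_unique hdom hP2t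
  rw [tsum_mul_left] at huniq
  have hsum : Summable (jt x z) := Summable.of_norm hjnorm
  have hval2 : ∑' j : ℤ, jt x z j
      = Dinf * ∏' n : ℕ, ((1 + z * x ^ n) * (1 + z⁻¹ * x ^ (n + 1))) := by
    rw [inv_mul_eq_iff_eq_mul₀ hDne] at huniq
    exact huniq
  have hfin : HasSum (jt x z)
      (Dinf * ∏' n : ℕ, ((1 + z * x ^ n) * (1 + z⁻¹ * x ^ (n + 1)))) :=
    (Summable.hasSum_iff hsum).2 hval2
  rwa [← Multipliable.tprod_mul hD hP2] at hfin

/-! ### Specialization -/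

section Special

variable {q : ℂ} (hq : ‖q‖ < 1) (hq0 : q ≠ 0)

include hq in
lemma qpow_lt_one (m : ℕ) (hm : 0 < m) : ‖q ^ m‖ < 1 := by
  rw [norm_pow]
  exact pow_lt_one₀ (norm_nonneg q) hq (by omega)

include hq in
lemma hfacA1 : ∀ n : ℕ, 1 + -(q ^ 24) * (q ^ 45) ^ n ≠ 0 := by
  intro n
  apply one_add_ne
  rw [norm_mul, norm_neg, norm_pow, norm_pow, norm_pow, ← pow_mul, ← pow_add]
  exact pow_lt_one₀ (norm_nonneg q) hq (by omega)

include hq0 in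
lemma invpow_mul {a b : ℕ} (hab : a ≤ b) : (q ^ a)⁻¹ * q ^ b = q ^ (b - a) := by
  have h : q ^ b = q ^ a * q ^ (b - a) := by rw [← pow_add]; congr 1; omega
  rw [h, inv_mul_cancel_left₀ (pow_ne_zero _ hq0)]

include hq hq0 in
lemma hfacA2 : ∀ n : ℕ, 1 + (-(q ^ 24))⁻¹ * (q ^ 45) ^ (n + 1) ≠ 0 := by
  intro n
  apply one_add_ne
  rw [inv_neg, neg_mul, norm_neg, ← pow_mul, norm_mul, norm_inv, norm_pow, norm_pow]
  rw [← inv_pow]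
  calc ‖q‖⁻¹ ^ 24 * ‖q‖ ^ (45 * (n + 1)) = ‖q‖⁻¹ ^ 24 * (‖q‖ ^ 24 * ‖q‖ ^ (45 * n + 21)) := by
        rw [← pow_add, show 24 + (45 * n + 21) = 45 * (n + 1) by omega]
    _ = ‖q‖ ^ (45 * n + 21) := by
        rw [← mul_assoc, ← mul_pow, inv_mul_cancel₀ (norm_ne_zero_iff.2 hq0), one_pow, one_mul]
    _ < 1 := pow_lt_one₀ (norm_nonneg q) hq (by omega)

include hq in
lemma hfacB1 : ∀ n : ℕ, 1 + -(q ^ 39) * (q ^ 45) ^ n ≠ 0 := by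
  intro n
  apply one_add_ne
  rw [norm_mul, norm_neg, norm_pow, norm_pow, norm_pow, ← pow_mul, ← pow_add]
  exact pow_lt_one₀ (norm_nonneg q) hq (by omega)

include hq hq0 in
lemma hfacB2 : ∀ n : ℕ, 1 + (-(q ^ 39))⁻¹ * (q ^ 45) ^ (n + 1) ≠ 0 := by
  intro n
  apply one_add_ne
  rw [inv_neg, neg_mul, norm_neg, ← pow_mul, norm_mul, norm_inv, norm_pow, norm_pow]
  rw [← inv_pow]
  calc ‖q‖⁻¹ ^ 39 * ‖q‖ ^ (45 * (n + 1)) = ‖q‖⁻¹ ^ 39 * (‖q‖ ^ 39 * ‖q‖ ^ (45 * n + 6)) := by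
        rw [← pow_add, show 39 + (45 * n + 6) = 45 * (n + 1) by omega]
    _ = ‖q‖ ^ (45 * n + 6) := by
        rw [← mul_assoc, ← mul_pow, inv_mul_cancel₀ (norm_ne_zero_iff.2 hq0), one_pow, one_mul]
    _ < 1 := pow_lt_one₀ (norm_nonneg q) hq (by omega)

include hq0 in
lemma sign_eq (j : ℤ) : (-1 : ℂ) ^ (3 * j) = (-1 : ℂ) ^ j := by
  rw [show 3 * j = j + 2 * j by ring, zpow_add₀ (by norm_num : (-1 : ℂ) ≠ 0),
    zpow_mul (-1 : ℂ) 2 j, show ((-1 : ℂ) ^ (2 : ℤ)) = 1 by norm_num, one_zpow, mul_one]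

include hq0 in
lemma zpow_pow_eq (a : ℕ) (j : ℤ) : ((q ^ a : ℂ)) ^ j = q ^ ((a : ℤ) * j) := by
  rw [← zpow_natCast q a, ← zpow_mul]

include hq0 in
lemma pow_toNat_eq (a : ℕ) {c : ℤ} (hc : 0 ≤ c) : ((q ^ a : ℂ)) ^ c.toNat = q ^ ((a : ℤ) * c) := by
  rw [← pow_mul, ← zpow_natCast q (a * c.toNat)]
  congr 1
  push_cast [Int.toNat_of_nonneg hc]
  ring

include hq0 in
lemma termA (j : ℤ) : (-1 : ℂ) ^ (3 * j) * q ^ (3 * j * (5 * (3 * j) + 1) / 2)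
    = jt (q ^ 45) (-(q ^ 24)) j := by
  obtain ⟨c, hc0, hc2, hcd⟩ := int_half j
  have hexp : 3 * j * (5 * (3 * j) + 1) / 2 = 24 * j + 45 * c := by
    have hE : 3 * j * (5 * (3 * j) + 1) = 2 * (24 * j + 45 * c) := by linear_combination 45 * hc2
    rw [hE, Int.mul_ediv_cancel_left _ (two_ne_zero)]
  rw [hexp, jt, hcd]
  have h1 : ((-(q ^ 24) : ℂ)) ^ j = (-1 : ℂ) ^ j * q ^ ((24 : ℤ) * j) := by
    rw [show -(q ^ 24) = (-1 : ℂ) * q ^ 24 by ring, mul_zpow, zpow_pow_eq hq0]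
    norm_num
  rw [h1, pow_toNat_eq hq0 45 hc0, sign_eq hq0 j, zpow_add₀ hq0]
  push_cast
  ring

include hq0 in
lemma termB (j : ℤ) : (-1 : ℂ) ^ (3 * j + 1) * q ^ ((3 * j + 1) * (5 * (3 * j + 1) + 1) / 2)
    = -(q ^ 3) * jt (q ^ 45) (-(q ^ 39)) j := by
  obtain ⟨c, hc0, hc2, hcd⟩ := int_half j
  have hexp : (3 * j + 1) * (5 * (3 * j + 1) + 1) / 2 = 3 + (39 * j + 45 * c) := by
    have hE : (3 * j + 1) * (5 * (3 * j + 1) + 1) = 2 * (3 + (39 * j + 45 * c)) := by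
      linear_combination 45 * hc2
    rw [hE, Int.mul_ediv_cancel_left _ (two_ne_zero)]
  rw [hexp, jt, hcd]
  have h1 : ((-(q ^ 39) : ℂ)) ^ j = (-1 : ℂ) ^ j * q ^ ((39 : ℤ) * j) := by
    rw [show -(q ^ 39) = (-1 : ℂ) * q ^ 39 by ring, mul_zpow, zpow_pow_eq hq0]
    norm_num
  have h2 : (-1 : ℂ) ^ (3 * j + 1) = -((-1 : ℂ) ^ j) := by
    rw [zpow_add_one₀ (by norm_num : (-1 : ℂ) ≠ 0), sign_eq hq0 j]
    ring
  rw [h1, pow_toNat_eq hq0 45 hc0, h2, zpow_add₀ hq0 3 (39 * j + 45 * c),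
    zpow_add₀ hq0 (39 * j) (45 * c), show ((q : ℂ) ^ (3 : ℤ)) = q ^ (3 : ℕ) from zpow_natCast q 3]
  push_cast
  ring

end Special

theorem bPhi_part_zero_or_one_mod_three (q : ℂ) (hq : ‖q‖ < 1) :
    ∑' k : {n : ℤ // n % 3 = 0 ∨ n % 3 = 1},
        (-1 : ℂ) ^ (k : ℤ) * q ^ ((k : ℤ) * (5 * (k : ℤ) + 1) / 2) =
      Gf (q ^ 3) := by
  by_cases hq0 : q = 0
  · subst hq0
    have hother : ∀ (b : {n : ℤ // n % 3 = 0 ∨ n % 3 = 1}),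
        b ≠ ⟨0, Or.inl rfl⟩ →
        (-1 : ℂ) ^ (b : ℤ) * (0 : ℂ) ^ ((b : ℤ) * (5 * (b : ℤ) + 1) / 2) = 0 := by
      intro b hb
      have hm : (b : ℤ) ≠ 0 := by
        intro h
        exact hb (Subtype.ext h)
      have hX2 : 2 ≤ (b : ℤ) * (5 * (b : ℤ) + 1) := by
        rcases lt_or_gt_of_ne hm with h | h
        · nlinarith
        · nlinarith
      have hpos : 0 < (b : ℤ) * (5 * (b : ℤ) + 1) / 2 := by
        generalize hX : (b : ℤ) * (5 * (b : ℤ) + 1) = X at hX2 ⊢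
        omega
      rw [zero_zpow _ (ne_of_gt hpos), mul_zero]
    rw [tsum_eq_single (⟨0, Or.inl rfl⟩ : {n : ℤ // n % 3 = 0 ∨ n % 3 = 1}) hother]
    have hc : ((⟨0, Or.inl rfl⟩ : {n : ℤ // n % 3 = 0 ∨ n % 3 = 1}) : ℤ) = 0 := rfl
    rw [hc]
    norm_num
    unfold Gf
    have t1 : (fun n : ℕ => ((1 : ℂ) - 0 ^ (15 * n + 15)) * (1 - 0 ^ (15 * n + 8))
        * (1 - 0 ^ (15 * n + 7))) = fun _ => 1 := by
      funext n
      rw [zero_pow (by omega : 15 * n + 15 ≠ 0), zero_pow (by omega : 15 * n + 8 ≠ 0),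
        zero_pow (by omega : 15 * n + 7 ≠ 0)]
      ring
    rw [t1, tprod_one]
    ring
  · have hx : ‖(q : ℂ) ^ 45‖ < 1 := qpow_lt_one hq 45 (by omega)
    have hx0 : (q : ℂ) ^ 45 ≠ 0 := pow_ne_zero _ hq0
    have hzA : -(q ^ 24) ≠ 0 := neg_ne_zero.2 (pow_ne_zero _ hq0)
    have hzB : -(q ^ 39) ≠ 0 := neg_ne_zero.2 (pow_ne_zero _ hq0)
    have hA := jtp hx hx0 hzA (hfacA1 hq) (hfacA2 hq hq0)
    have hB := jtp hx hx0 hzB (hfacB1 hq) (hfacB2 hq hq0)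
    have hPA : (∏' n : ℕ, ((1 - (q ^ 45) ^ (n + 1)) * ((1 + -(q ^ 24) * (q ^ 45) ^ n)
          * (1 + (-(q ^ 24))⁻¹ * (q ^ 45) ^ (n + 1)))))
        = ∏' n : ℕ, (1 - (q ^ 3) ^ (15 * n + 15)) * (1 - (q ^ 3) ^ (15 * n + 8))
          * (1 - (q ^ 3) ^ (15 * n + 7)) := by
      refine tprod_congr fun n => ?_
      have e1 : ((q ^ 45 : ℂ)) ^ (n + 1) = (q ^ 3) ^ (15 * n + 15) := by
        rw [← pow_mul, ← pow_mul]
        congr 1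
        ring
      have e2 : -(q ^ 24) * (q ^ 45) ^ n = -((q ^ 3) ^ (15 * n + 8)) := by
        have h : (q ^ 24 : ℂ) * (q ^ 45) ^ n = (q ^ 3) ^ (15 * n + 8) := by
          rw [← pow_mul, ← pow_add, ← pow_mul]
          congr 1
          ring
        rw [neg_mul, h]
      have e3 : (-(q ^ 24))⁻¹ * (q ^ 45) ^ (n + 1) = -((q ^ 3) ^ (15 * n + 7)) := by
        rw [inv_neg, neg_mul, ← pow_mul, invpow_mul hq0 (by omega : 24 ≤ 45 * (n + 1)),
          show 45 * (n + 1) - 24 = 3 * (15 * n + 7) by omega, pow_mul]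
      rw [e2, e3, e1]
      ring
    have hPB : (∏' n : ℕ, ((1 - (q ^ 45) ^ (n + 1)) * ((1 + -(q ^ 39) * (q ^ 45) ^ n)
          * (1 + (-(q ^ 39))⁻¹ * (q ^ 45) ^ (n + 1)))))
        = ∏' n : ℕ, (1 - (q ^ 3) ^ (15 * n + 15)) * (1 - (q ^ 3) ^ (15 * n + 2))
          * (1 - (q ^ 3) ^ (15 * n + 13)) := by
      refine tprod_congr fun n => ?_
      have e1 : ((q ^ 45 : ℂ)) ^ (n + 1) = (q ^ 3) ^ (15 * n + 15) := by
        rw [← pow_mul, ← pow_mul]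
        congr 1
        ring
      have e2 : -(q ^ 39) * (q ^ 45) ^ n = -((q ^ 3) ^ (15 * n + 13)) := by
        have h : (q ^ 39 : ℂ) * (q ^ 45) ^ n = (q ^ 3) ^ (15 * n + 13) := by
          rw [← pow_mul, ← pow_add, ← pow_mul]
          congr 1
          ring
        rw [neg_mul, h]
      have e3 : (-(q ^ 39))⁻¹ * (q ^ 45) ^ (n + 1) = -((q ^ 3) ^ (15 * n + 2)) := by
        rw [inv_neg, neg_mul, ← pow_mul, invpow_mul hq0 (by omega : 39 ≤ 45 * (n + 1)),
          show 45 * (n + 1) - 39 = 3 * (15 * n + 2) by omega, pow_mul]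
      rw [e2, e3, e1]
      ring
    rw [hPA] at hA
    rw [hPB] at hB
    have hA2 : HasSum (fun j : ℤ => (-1 : ℂ) ^ (3 * j) * q ^ (3 * j * (5 * (3 * j) + 1) / 2))
        (∏' n : ℕ, (1 - (q ^ 3) ^ (15 * n + 15)) * (1 - (q ^ 3) ^ (15 * n + 8))
          * (1 - (q ^ 3) ^ (15 * n + 7))) := by
      rw [show (fun j : ℤ => (-1 : ℂ) ^ (3 * j) * q ^ (3 * j * (5 * (3 * j) + 1) / 2))
        = jt (q ^ 45) (-(q ^ 24)) from funext (termA hq0)]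
      exact hA
    have hB2 : HasSum (fun j : ℤ =>
        (-1 : ℂ) ^ (3 * j + 1) * q ^ ((3 * j + 1) * (5 * (3 * j + 1) + 1) / 2))
        (-(q ^ 3) * ∏' n : ℕ, (1 - (q ^ 3) ^ (15 * n + 15)) * (1 - (q ^ 3) ^ (15 * n + 2))
          * (1 - (q ^ 3) ^ (15 * n + 13))) := by
      rw [show (fun j : ℤ =>
          (-1 : ℂ) ^ (3 * j + 1) * q ^ ((3 * j + 1) * (5 * (3 * j + 1) + 1) / 2))
        = fun j : ℤ => -(q ^ 3) * jt (q ^ 45) (-(q ^ 39)) j from funext (termB hq0)]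
      exact hB.mul_left (-(q ^ 3))
    -- assemble over the subtype
    have hd : Disjoint {n : ℤ | n % 3 = 0} {n : ℤ | n % 3 = 1} := by
      rw [Set.disjoint_left]
      intro n h0 h1
      simp only [Set.mem_setOf_eq] at h0 h1
      omega
    let e0 : ℤ ≃ ↥{n : ℤ | n % 3 = 0} :=
      { toFun := fun j => ⟨3 * j, by simp only [Set.mem_setOf_eq]; omega⟩
        invFun := fun k => k.1 / 3
        left_inv := fun j => by show 3 * j / 3 = j; omega
        right_inv := fun k => Subtype.ext (by
          have h := k.2
          simp only [Set.mem_setOf_eq] at h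
          show 3 * (k.1 / 3) = k.1
          omega) }
    let e1 : ℤ ≃ ↥{n : ℤ | n % 3 = 1} :=
      { toFun := fun j => ⟨3 * j + 1, by simp only [Set.mem_setOf_eq]; omega⟩
        invFun := fun k => k.1 / 3
        left_inv := fun j => by show (3 * j + 1) / 3 = j; omega
        right_inv := fun k => Subtype.ext (by
          have h := k.2
          simp only [Set.mem_setOf_eq] at h
          show 3 * (k.1 / 3) + 1 = k.1
          omega) }
    have hS0 : HasSum ((fun n : ℤ => (-1 : ℂ) ^ n * q ^ (n * (5 * n + 1) / 2))
          ∘ (Subtype.val : ↥{n : ℤ | n % 3 = 0} → ℤ))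
        (∏' n : ℕ, (1 - (q ^ 3) ^ (15 * n + 15)) * (1 - (q ^ 3) ^ (15 * n + 8))
          * (1 - (q ^ 3) ^ (15 * n + 7))) := by
      refine (Equiv.hasSum_iff e0).1 ?_
      exact hA2
    have hS1 : HasSum ((fun n : ℤ => (-1 : ℂ) ^ n * q ^ (n * (5 * n + 1) / 2))
          ∘ (Subtype.val : ↥{n : ℤ | n % 3 = 1} → ℤ))
        (-(q ^ 3) * ∏' n : ℕ, (1 - (q ^ 3) ^ (15 * n + 15)) * (1 - (q ^ 3) ^ (15 * n + 2))
          * (1 - (q ^ 3) ^ (15 * n + 13))) := by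
      refine (Equiv.hasSum_iff e1).1 ?_
      exact hB2
    have hT := (HasSum.add_disjoint hd hS0 hS1).tsum_eq
    have hGf : Gf (q ^ 3)
        = (∏' n : ℕ, (1 - (q ^ 3) ^ (15 * n + 15)) * (1 - (q ^ 3) ^ (15 * n + 8))
            * (1 - (q ^ 3) ^ (15 * n + 7)))
          + (-(q ^ 3) * ∏' n : ℕ, (1 - (q ^ 3) ^ (15 * n + 15)) * (1 - (q ^ 3) ^ (15 * n + 2))
            * (1 - (q ^ 3) ^ (15 * n + 13))) := by
      unfold Gf
      ring
    rw [hGf]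
    exact hT
end

section
/- The branching coefficients for V^{Λ₀} are unique: if f₁, g₁, f₂, g₂ are functions analytic on the open unit disc in ℂ such that f₁(q³)·a(q) + q·g₁(q³)·b(q) = f₂(q³)·a(q) + q·g₂(q³)·b(q) for all complex q with |q| < 1, then f₁ = f₂ and g₁ = g₂ on the open unit disc. (Uniqueness of the solution of equation (3.6), proved in Section 3.1 via evaluation at q and ζq for a primitive cube root of unity ζ and invertibility of the resulting 2×2 determinant.) -/
open scoped BigOperators

open Complex Metric Filter

noncomputable def logTerm (a b : ℕ → ℕ) (q : ℂ) (n : ℕ) : ℂ :=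
  -Complex.log (1 - q ^ a n) + -Complex.log (1 - q ^ b n)

lemma one_sub_pow_ne_s19 {q : ℂ} (hq : ‖q‖ < 1) {k : ℕ} (hk : 1 ≤ k) : 1 - q ^ k ≠ 0 := by
  intro h
  have h1 : ‖q ^ k‖ < 1 := by
    rw [norm_pow]; exact pow_lt_one₀ (norm_nonneg q) hq (by omega)
  rw [sub_eq_zero] at h
  rw [← h] at h1; simp at h1

lemma norm_log_one_sub_pow_le {q : ℂ} (hq : ‖q‖ ≤ 1/2) {k m : ℕ} (hm : m + 1 ≤ k) :
    ‖Complex.log (1 - q ^ k)‖ ≤ (3/2) * (1/2)^(m+1) := by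
  have hk : ‖q ^ k‖ ≤ (1/2 : ℝ)^(m+1) := by
    rw [norm_pow]
    calc ‖q‖ ^ k ≤ (1/2 : ℝ)^k := pow_le_pow_left₀ (norm_nonneg q) hq k
    _ ≤ (1/2 : ℝ)^(m+1) := pow_le_pow_of_le_one (by norm_num) (by norm_num) hm
  have hhalf : ‖(-(q ^ k))‖ ≤ 1/2 := by
    rw [norm_neg]
    refine hk.trans ?_
    calc (1/2:ℝ)^(m+1) ≤ (1/2:ℝ)^1 := pow_le_pow_of_le_one (by norm_num) (by norm_num) (by omega)
    _ = 1/2 := by norm_num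
  have := Complex.norm_log_one_add_half_le_self (z := -(q^k)) hhalf
  rw [show (1 : ℂ) + -(q^k) = 1 - q^k by ring] at this
  refine this.trans ?_
  rw [norm_neg]
  have := mul_le_mul_of_nonneg_left hk (by norm_num : (0:ℝ) ≤ 3/2)
  exact this

lemma logTerm_bound (a b : ℕ → ℕ) (ha : ∀ n, n + 1 ≤ a n) (hb : ∀ n, n + 1 ≤ b n)
    {q : ℂ} (hq : ‖q‖ ≤ 1/2) (n : ℕ) : ‖logTerm a b q n‖ ≤ 3 * (1/2)^(n+1) := by
  unfold logTerm
  calc ‖-Complex.log (1 - q ^ a n) + -Complex.log (1 - q ^ b n)‖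
      ≤ ‖-Complex.log (1 - q ^ a n)‖ + ‖-Complex.log (1 - q ^ b n)‖ := norm_add_le _ _
    _ ≤ (3/2) * (1/2)^(n+1) + (3/2) * (1/2)^(n+1) := by
        rw [norm_neg, norm_neg]
        exact add_le_add (norm_log_one_sub_pow_le hq (ha n)) (norm_log_one_sub_pow_le hq (hb n))
    _ = 3 * (1/2)^(n+1) := by ring

lemma summable_bound : Summable (fun n : ℕ => 3 * (1/2 : ℝ)^(n+1)) := by
  apply Summable.mul_left
  exact (summable_geometric_of_lt_one (by norm_num) (by norm_num)).comp_injective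
    (add_left_injective 1)

lemma logTerm_summable (a b : ℕ → ℕ) (ha : ∀ n, n + 1 ≤ a n) (hb : ∀ n, n + 1 ≤ b n)
    {q : ℂ} (hq : ‖q‖ ≤ 1/2) : Summable (logTerm a b q) :=
  Summable.of_norm_bounded summable_bound (logTerm_bound a b ha hb hq)

lemma hasProd_exp (a b : ℕ → ℕ) (ha : ∀ n, n + 1 ≤ a n) (hb : ∀ n, n + 1 ≤ b n)
    {q : ℂ} (hq : ‖q‖ ≤ 1/2) :
    HasProd (fun n => ((1 - q ^ a n) * (1 - q ^ b n))⁻¹)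
      (Complex.exp (∑' n, logTerm a b q n)) := by
  have hq1 : ‖q‖ < 1 := lt_of_le_of_lt hq (by norm_num)
  have hs := (logTerm_summable a b ha hb hq).hasSum.cexp
  have he : (cexp ∘ logTerm a b q) = fun n => ((1 - q ^ a n) * (1 - q ^ b n))⁻¹ := by
    funext n
    have hA : (1 - q ^ a n) ≠ 0 := one_sub_pow_ne_s19 hq1 (by have := ha n; omega)
    have hB : (1 - q ^ b n) ≠ 0 := one_sub_pow_ne_s19 hq1 (by have := hb n; omega)
    simp only [Function.comp, logTerm, Complex.exp_add, Complex.exp_neg,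
      Complex.exp_log hA, Complex.exp_log hB, mul_inv]
  rwa [he] at hs

lemma contOn_tsum_logTerm (a b : ℕ → ℕ) (ha : ∀ n, n + 1 ≤ a n) (hb : ∀ n, n + 1 ≤ b n) :
    ContinuousOn (fun q => ∑' n, logTerm a b q n) (closedBall (0:ℂ) (1/2)) := by
  apply continuousOn_tsum (u := fun n : ℕ => 3 * (1/2 : ℝ)^(n+1)) _ summable_bound
  · intro n q hq
    rw [mem_closedBall, Complex.dist_eq, sub_zero] at hq
    exact logTerm_bound a b ha hb hq n
  · intro n
    have hck : ∀ k : ℕ, 1 ≤ k → ContinuousOn (fun q : ℂ => Complex.log (1 - q ^ k))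
        (closedBall (0:ℂ) (1/2)) := by
      intro k hk
      refine ContinuousOn.clog ((continuousOn_const).sub (continuous_pow k).continuousOn) ?_
      intro q hq
      rw [mem_closedBall, Complex.dist_eq, sub_zero] at hq
      rw [Complex.mem_slitPlane_iff]
      left
      have h1 : |(q ^ k).re| ≤ ‖q ^ k‖ := Complex.abs_re_le_norm _
      have h2 : ‖q ^ k‖ ≤ 1/2 := by
        rw [norm_pow]
        calc ‖q‖ ^ k ≤ (1/2 : ℝ)^k := pow_le_pow_left₀ (norm_nonneg q) hq k
        _ ≤ (1/2 : ℝ)^1 := pow_le_pow_of_le_one (by norm_num) (by norm_num) hk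
        _ = 1/2 := by norm_num
      have : (q ^ k).re ≤ 1/2 := le_trans (le_abs_self _) (h1.trans h2)
      simp only [Complex.sub_re, Complex.one_re]
      linarith
    exact ((hck _ (by have := ha n; omega)).neg).add ((hck _ (by have := hb n; omega)).neg)

lemma rrA_eq {q : ℂ} (hq : ‖q‖ ≤ 1/2) :
    rrA q = Complex.exp (∑' n, logTerm (fun n => 5*n+3) (fun n => 5*n+2) q n) :=
  (hasProd_exp _ _ (fun n => by omega) (fun n => by omega) hq).tprod_eq

lemma rrB_eq {q : ℂ} (hq : ‖q‖ ≤ 1/2) :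
    rrB q = Complex.exp (∑' n, logTerm (fun n => 5*n+4) (fun n => 5*n+1) q n) :=
  (hasProd_exp _ _ (fun n => by omega) (fun n => by omega) hq).tprod_eq

lemma rrA_ne_zero {q : ℂ} (hq : ‖q‖ ≤ 1/2) : rrA q ≠ 0 := by
  rw [rrA_eq hq]; exact Complex.exp_ne_zero _

lemma rrB_ne_zero {q : ℂ} (hq : ‖q‖ ≤ 1/2) : rrB q ≠ 0 := by
  rw [rrB_eq hq]; exact Complex.exp_ne_zero _

lemma logTerm_zero (a b : ℕ → ℕ) (ha : ∀ n, n + 1 ≤ a n) (hb : ∀ n, n + 1 ≤ b n) (n : ℕ) :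
    logTerm a b 0 n = 0 := by
  unfold logTerm
  rw [zero_pow (by have := ha n; omega), zero_pow (by have := hb n; omega)]
  simp

lemma rrA_contOn : ContinuousOn rrA (closedBall (0:ℂ) (1/2)) := by
  have := (contOn_tsum_logTerm (fun n => 5*n+3) (fun n => 5*n+2)
    (fun n => by show n+1 ≤ 5*n+3; omega) (fun n => by show n+1 ≤ 5*n+2; omega)).cexp
  refine this.congr ?_
  intro q hq
  rw [mem_closedBall, Complex.dist_eq, sub_zero] at hq
  exact rrA_eq hq

lemma rrB_contOn : ContinuousOn rrB (closedBall (0:ℂ) (1/2)) := by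
  have := (contOn_tsum_logTerm (fun n => 5*n+4) (fun n => 5*n+1)
    (fun n => by show n+1 ≤ 5*n+4; omega) (fun n => by show n+1 ≤ 5*n+1; omega)).cexp
  refine this.congr ?_
  intro q hq
  rw [mem_closedBall, Complex.dist_eq, sub_zero] at hq
  exact rrB_eq hq

lemma rrA_zero : rrA 0 = 1 := by
  rw [rrA_eq (by norm_num)]
  rw [tsum_congr (logTerm_zero _ _ (fun n => by show n+1 ≤ 5*n+3; omega)
    (fun n => by show n+1 ≤ 5*n+2; omega))]
  simp

lemma rrB_zero : rrB 0 = 1 := by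
  rw [rrB_eq (by norm_num)]
  rw [tsum_congr (logTerm_zero _ _ (fun n => by show n+1 ≤ 5*n+4; omega)
    (fun n => by show n+1 ≤ 5*n+1; omega))]
  simp

lemma rrA_contAt : ContinuousAt rrA 0 :=
  rrA_contOn.continuousAt (closedBall_mem_nhds 0 (by norm_num))

lemma rrB_contAt : ContinuousAt rrB 0 :=
  rrB_contOn.continuousAt (closedBall_mem_nhds 0 (by norm_num))

noncomputable def zeta3 : ℂ := Complex.exp (2 * Real.pi * Complex.I / 3)

lemma zeta3_prim : IsPrimitiveRoot zeta3 3 := by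
  have := Complex.isPrimitiveRoot_exp 3 (by norm_num)
  have h : zeta3 = Complex.exp (2 * Real.pi * Complex.I / (3:ℕ)) := by
    rw [zeta3]; norm_num
  rw [h]; exact this

lemma zeta3_pow : zeta3 ^ 3 = 1 := zeta3_prim.pow_eq_one
lemma zeta3_ne_one : zeta3 ≠ 1 := zeta3_prim.ne_one (by norm_num)

lemma zeta3_norm : ‖zeta3‖ = 1 := by
  have : zeta3 = Complex.exp (((2 * Real.pi / 3 : ℝ) : ℂ) * Complex.I) := by
    rw [zeta3]; congr 1; push_cast; ring
  rw [this, Complex.norm_exp_ofReal_mul_I]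

noncomputable def detF (q : ℂ) : ℂ :=
  rrA q * (zeta3 * rrB (zeta3 * q)) - rrA (zeta3 * q) * rrB q

lemma contAt_comp_zeta (f : ℂ → ℂ) (hf : ContinuousAt f 0) :
    ContinuousAt (fun q => f (zeta3 * q)) 0 := by
  have h1 : ContinuousAt (fun q : ℂ => zeta3 * q) 0 := by fun_prop
  have h2 : ContinuousAt f (zeta3 * 0) := by rwa [mul_zero]
  exact h2.comp h1

lemma detF_contAt : ContinuousAt detF 0 := by
  unfold detF
  exact (rrA_contAt.mul (continuousAt_const.mul (contAt_comp_zeta _ rrB_contAt))).sub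
    ((contAt_comp_zeta _ rrA_contAt).mul rrB_contAt)

lemma detF_zero : detF 0 = zeta3 - 1 := by
  simp [detF, rrA_zero, rrB_zero]

lemma exists_eps : ∃ ε : ℝ, 0 < ε ∧ ε ≤ 1/2 ∧ ∀ q : ℂ, ‖q‖ < ε → detF q ≠ 0 := by
  have hne : detF 0 ≠ 0 := by
    rw [detF_zero, sub_ne_zero]; exact zeta3_ne_one
  have := detF_contAt.eventually_ne hne
  rw [Metric.eventually_nhds_iff] at this
  obtain ⟨δ, hδ, hδ'⟩ := this
  refine ⟨min δ (1/2), by positivity, min_le_right _ _, ?_⟩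
  intro q hq
  apply hδ'
  rw [Complex.dist_eq, sub_zero]
  exact hq.trans_le (min_le_left _ _)

theorem branching_coefficients_unique
    (f₁ g₁ f₂ g₂ : ℂ → ℂ)
    (hf₁ : AnalyticOnNhd ℂ f₁ (Metric.ball 0 1))
    (hg₁ : AnalyticOnNhd ℂ g₁ (Metric.ball 0 1))
    (hf₂ : AnalyticOnNhd ℂ f₂ (Metric.ball 0 1))
    (hg₂ : AnalyticOnNhd ℂ g₂ (Metric.ball 0 1))
    (heq : ∀ q : ℂ, ‖q‖ < 1 →
      f₁ (q ^ 3) * rrA q + q * g₁ (q ^ 3) * rrB q =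
        f₂ (q ^ 3) * rrA q + q * g₂ (q ^ 3) * rrB q) :
    ∀ q ∈ Metric.ball (0 : ℂ) 1, f₁ q = f₂ q ∧ g₁ q = g₂ q := by
  obtain ⟨ε, hε0, hε2, hεd⟩ := exists_eps
  have key : ∀ q : ℂ, ‖q‖ < 1 →
      (f₁ (q^3) - f₂ (q^3)) * rrA q + q * (g₁ (q^3) - g₂ (q^3)) * rrB q = 0 := by
    intro q hq
    linear_combination heq q hq
  have hvanish : ∀ q : ℂ, ‖q‖ < ε → q ≠ 0 →
      f₁ (q^3) - f₂ (q^3) = 0 ∧ g₁ (q^3) - g₂ (q^3) = 0 := by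
    intro q hq hq0
    have hq2 : ‖q‖ ≤ 1/2 := (hq.trans_le hε2).le
    have hq1 : ‖q‖ < 1 := lt_of_le_of_lt hq2 (by norm_num)
    have hz1 : ‖zeta3 * q‖ < 1 := by rw [norm_mul, zeta3_norm, one_mul]; exact hq1
    have e1 := key q hq1
    have e2 := key (zeta3 * q) hz1
    rw [mul_pow, zeta3_pow, one_mul] at e2
    have hd := hεd q hq
    have hx : (f₁ (q^3) - f₂ (q^3)) * detF q = 0 := by
      unfold detF
      linear_combination (zeta3 * rrB (zeta3 * q)) * e1 - rrB q * e2
    have hx0 : f₁ (q^3) - f₂ (q^3) = 0 := by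
      rcases mul_eq_zero.1 hx with h | h
      · exact h
      · exact absurd h hd
    refine ⟨hx0, ?_⟩
    rw [hx0, zero_mul, zero_add] at e1
    have := mul_eq_zero.1 e1
    rcases this with h | h
    · rcases mul_eq_zero.1 h with h' | h'
      · exact absurd h' hq0
      · exact h'
    · exact absurd h (rrB_ne_zero hq2)
  have hfreq : ∀ h : ℂ → ℂ, (∀ q : ℂ, ‖q‖ < ε → q ≠ 0 → h (q^3) = 0) →
      ∃ᶠ z in nhdsWithin (0:ℂ) {(0:ℂ)}ᶜ, h z = 0 := by
    intro h hh
    rw [Filter.frequently_iff]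
    intro U hU
    rw [Metric.mem_nhdsWithin_iff] at hU
    obtain ⟨r, hr, hrU⟩ := hU
    set δ : ℝ := min (min ε r) 1 / 2 with hδ
    have hδ0 : 0 < δ := by positivity
    have hδε : δ < ε := by
      have : δ ≤ ε / 2 := by
        apply div_le_div_of_nonneg_right _ (by norm_num)
        exact (min_le_left _ _).trans (min_le_left _ _)
      linarith
    have hδr : δ < r := by
      have : δ ≤ r / 2 := by
        apply div_le_div_of_nonneg_right _ (by norm_num)
        exact (min_le_left _ _).trans (min_le_right _ _)
      linarith
    have hδ1 : δ ≤ 1 := by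
      have : δ ≤ 1 / 2 := by
        apply div_le_div_of_nonneg_right _ (by norm_num)
        exact min_le_right _ _
      linarith
    refine ⟨((δ:ℝ):ℂ)^3, hrU ⟨?_, ?_⟩, ?_⟩
    · rw [Metric.mem_ball, Complex.dist_eq, sub_zero, norm_pow, Complex.norm_real,
        Real.norm_of_nonneg hδ0.le]
      calc δ ^ 3 ≤ δ ^ 1 := pow_le_pow_of_le_one hδ0.le hδ1 (by omega)
      _ = δ := pow_one δ
      _ < r := hδr
    · simp only [Set.mem_compl_iff, Set.mem_singleton_iff]
      intro hc
      have : ((δ:ℝ):ℂ) = 0 := by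
        have := pow_eq_zero_iff (n := 3) (by omega) |>.1 hc
        exact this
      rw [Complex.ofReal_eq_zero] at this
      linarith
    · apply hh
      · rw [Complex.norm_real, Real.norm_of_nonneg hδ0.le]; exact hδε
      · rw [ne_eq, Complex.ofReal_eq_zero]; intro hc; linarith
  have hball : IsPreconnected (Metric.ball (0:ℂ) 1) := (convex_ball (0:ℂ) 1).isPreconnected
  have h0mem : (0:ℂ) ∈ Metric.ball (0:ℂ) 1 := Metric.mem_ball_self one_pos
  have hF : Set.EqOn (f₁ - f₂) 0 (Metric.ball (0:ℂ) 1) := by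
    apply (hf₁.sub hf₂).eqOn_zero_of_preconnected_of_frequently_eq_zero hball h0mem
    exact hfreq _ (fun q hq hq0 => (hvanish q hq hq0).1)
  have hG : Set.EqOn (g₁ - g₂) 0 (Metric.ball (0:ℂ) 1) := by
    apply (hg₁.sub hg₂).eqOn_zero_of_preconnected_of_frequently_eq_zero hball h0mem
    exact hfreq _ (fun q hq hq0 => (hvanish q hq hq0).2)
  intro q hq
  constructor
  · have := hF hq; simpa [sub_eq_zero] using this
  · have := hG hq; simpa [sub_eq_zero] using this
end
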